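/- arXiv:0904.4143 — 5 statements merged into one kernel-verified Lean document; each statement's English description precedes it below -/
import Mathlib

section
/- For every n ∈ ℕ and every x ∈ K∖O, the supremum defining T v_n(x) is attained at some a ∈ A(x); each value-iteration function v_n is Borel measurable with 0 ≤ v_n ≤ 1 on X and v_n ≤ v_{n+1} pointwise on X; and the pointwise limit v*(x) := lim_{n→∞} v_n(x) satisfies the Bellman equation: for every x ∈ X, v*(x) = 1_O(x) + 1_{K∖O}(x) · max_{a ∈ A(x)} ∫_X 1_K(y) v*(y) Q(dy|x,a), where the maximum over A(x) is attained. -/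
open MeasureTheory Set Filter Topology

lemma fiber_cont {X A : Type*} [TopologicalSpace X] [TopologicalSpace A]
    {S : Set X} {Amap : X → Set A} {F : X × A → ℝ}
    (hF : ContinuousOn F {p : X × A | p.1 ∈ S ∧ p.2 ∈ Amap p.1})
    {x : X} (hx : x ∈ S) :
    ContinuousOn (fun a => F (x, a)) (Amap x) := by
  apply hF.comp (Continuous.continuousOn (by continuity))
  intro a ha
  exact ⟨hx, ha⟩

lemma attain {X A : Type*} [TopologicalSpace X] [TopologicalSpace A]
    {S : Set X} {Amap : X → Set A} {F : X × A → ℝ}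
    (hF : ContinuousOn F {p : X × A | p.1 ∈ S ∧ p.2 ∈ Amap p.1})
    {x : X} (hx : x ∈ S) (hne : (Amap x).Nonempty) (hcp : IsCompact (Amap x)) :
    sSup ((fun a => F (x, a)) '' Amap x) ∈ (fun a => F (x, a)) '' Amap x := by
  have hcpi : IsCompact ((fun a => F (x, a)) '' Amap x) :=
    hcp.image_of_continuousOn (fiber_cont hF hx)
  exact hcpi.sSup_mem (hne.image _)

lemma usc_meas {X A : Type*} [TopologicalSpace X] [MeasurableSpace X] [BorelSpace X]
    [TopologicalSpace A]
    {S : Set X} (hS : MeasurableSet S) {Amap : X → Set A}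
    (hAne : ∀ x ∈ S, (Amap x).Nonempty)
    (hAcp : ∀ x ∈ S, IsCompact (Amap x))
    (hAuh : ∀ x ∈ S, ∀ U : Set A, IsOpen U → Amap x ⊆ U →
      ∃ V : Set X, IsOpen V ∧ x ∈ V ∧ ∀ z ∈ S ∩ V, Amap z ⊆ U)
    {F : X × A → ℝ}
    (hF : ContinuousOn F {p : X × A | p.1 ∈ S ∧ p.2 ∈ Amap p.1}) :
    Measurable (S.indicator fun x => sSup ((fun a => F (x, a)) '' Amap x)) := by
  set m : X → ℝ := fun x => sSup ((fun a => F (x, a)) '' Amap x) with hm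
  have key : ∀ c : ℝ, ∀ x0, x0 ∈ S → m x0 < c →
      ∃ V : Set X, IsOpen V ∧ x0 ∈ V ∧ ∀ z ∈ S ∩ V, m z < c := by
    intro c x0 hx0 hlt
    have hbdd : BddAbove ((fun a => F (x0, a)) '' Amap x0) :=
      ((hAcp x0 hx0).image_of_continuousOn (fiber_cont hF hx0)).bddAbove
    have hrect : ∀ a, a ∈ Amap x0 → ∃ (U : Set X) (W : Set A), IsOpen U ∧ IsOpen W ∧
        x0 ∈ U ∧ a ∈ W ∧
        ∀ p ∈ (U ×ˢ W) ∩ {p : X × A | p.1 ∈ S ∧ p.2 ∈ Amap p.1}, F p < c := by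
      intro a ha
      have hpa : (x0, a) ∈ {p : X × A | p.1 ∈ S ∧ p.2 ∈ Amap p.1} := ⟨hx0, ha⟩
      have hFa : F (x0, a) < c :=
        lt_of_le_of_lt (le_csSup hbdd ⟨a, ha, rfl⟩) hlt
      have hmem : F ⁻¹' Iio c ∈ 𝓝[{p : X × A | p.1 ∈ S ∧ p.2 ∈ Amap p.1}] (x0, a) :=
        (hF (x0, a) hpa) (Iio_mem_nhds hFa)
      obtain ⟨u, huo, hpu, hsub⟩ := mem_nhdsWithin.mp hmem
      obtain ⟨U, W, hUo, hWo, hxU, haW, hUW⟩ := isOpen_prod_iff.mp huo x0 a hpu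
      exact ⟨U, W, hUo, hWo, hxU, haW, fun p hp => hsub ⟨hUW hp.1, hp.2⟩⟩
    choose U W hUo hWo hxU haW hFlt using hrect
    have hcover : Amap x0 ⊆ ⋃ a : Amap x0, W a a.2 := fun a ha =>
      mem_iUnion.mpr ⟨⟨a, ha⟩, haW a ha⟩
    obtain ⟨t, ht⟩ := (hAcp x0 hx0).elim_finite_subcover
      (fun i : Amap x0 => W i i.2) (fun i => hWo i i.2) hcover
    obtain ⟨V0, hV0o, hxV0, hV0⟩ := hAuh x0 hx0 (⋃ i ∈ t, W i i.2)
      (isOpen_iUnion fun (i : Amap x0) => isOpen_iUnion fun _ => hWo i.1 i.2) ht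
    refine ⟨(⋂ i ∈ t, U i i.2) ∩ V0,
      (isOpen_biInter_finset fun (i : Amap x0) _ => hUo i.1 i.2).inter hV0o,
      ⟨mem_iInter₂.mpr fun (i : Amap x0) _ => hxU i.1 i.2, hxV0⟩, ?_⟩
    rintro z ⟨hzS, hzU, hzV0⟩
    obtain ⟨a, ha, hEq⟩ := attain hF hzS (hAne z hzS) (hAcp z hzS)
    rw [hm]
    simp only
    rw [← hEq]
    have haW' : a ∈ ⋃ i ∈ t, W i i.2 := hV0 z ⟨hzS, hzV0⟩ ha
    obtain ⟨i, hi, hai⟩ := mem_iUnion₂.mp haW'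
    exact hFlt i i.2 (z, a) ⟨⟨mem_iInter₂.mp hzU i hi, hai⟩, hzS, ha⟩
  have hrel : ∀ c : ℝ, ∃ Vc : Set X, IsOpen Vc ∧ S ∩ {x | m x < c} = S ∩ Vc := by
    intro c
    choose V hVo hxV hVlt using fun x (hx : x ∈ S ∩ {x | m x < c}) => key c x hx.1 hx.2
    refine ⟨⋃ (x : X) (hx : x ∈ S ∩ {x | m x < c}), V x hx,
      isOpen_iUnion fun x => isOpen_iUnion fun hx => hVo x hx, ?_⟩
    ext z
    constructor
    · rintro ⟨hzS, hzc⟩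
      exact ⟨hzS, mem_iUnion.mpr ⟨z, mem_iUnion.mpr ⟨⟨hzS, hzc⟩, hxV z ⟨hzS, hzc⟩⟩⟩⟩
    · rintro ⟨hzS, hzV⟩
      obtain ⟨x, hx⟩ := mem_iUnion.mp hzV
      obtain ⟨hxmem, hzVx⟩ := mem_iUnion.mp hx
      exact ⟨hzS, hVlt x hxmem z ⟨hzS, hzVx⟩⟩
  apply measurable_of_Iio
  intro c
  obtain ⟨Vc, hVco, hVc⟩ := hrel c
  have : (S.indicator m) ⁻¹' Iio c =
      (S ∩ Vc) ∪ (Sᶜ ∩ {x : X | (0:ℝ) < c}) := by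
    rw [← hVc]
    ext x
    by_cases hx : x ∈ S <;>
      simp [indicator_of_mem, indicator_of_notMem, hx, mem_Iio]
  rw [this]
  refine ((hS.inter hVco.measurableSet).union (hS.compl.inter ?_))
  by_cases h0 : (0:ℝ) < c
  · simpa [h0] using MeasurableSet.univ
  · simpa [h0] using MeasurableSet.empty

/-- The dynamic programming operator:
`Tu(x) = 1_O(x) + 1_{K∖O}(x) ⬝ sup_{a ∈ A(x)} ∫ 1_K(y) u(y) Q(dy|x,a)`. -/
noncomputable def dpOp {X A : Type*} [MeasurableSpace X] (O K : Set X)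
    (Amap : X → Set A) (Q : X → A → Measure X) (u : X → ℝ) : X → ℝ := fun x =>
  O.indicator (1 : X → ℝ) x +
    (K \ O).indicator
      (fun x' => sSup ((fun a => ∫ y, K.indicator u y ∂(Q x' a)) '' Amap x')) x


/-- The value-iteration functions: `v₀ = 1_O` and `v_{n+1} = T v_n`. -/
noncomputable def viter {X A : Type*} [MeasurableSpace X] (O K : Set X)
    (Amap : X → Set A) (Q : X → A → Measure X) : ℕ → X → ℝ
  | 0 => O.indicator (1 : X → ℝ)
  | n + 1 => dpOp O K Amap Q (viter O K Amap Q n)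

theorem stmt0 {X A : Type*}
    [TopologicalSpace X] [PolishSpace X] [MeasurableSpace X] [BorelSpace X]
    [TopologicalSpace A] [PolishSpace A] [MeasurableSpace A] [BorelSpace A]
    (O K : Set X) (hOne : O.Nonempty) (hKne : K.Nonempty)
    (hmO : MeasurableSet O) (hmK : MeasurableSet K) (hOK : O ⊂ K)
    (Amap : X → Set A)
    (hAne : ∀ x ∈ K \ O, (Amap x).Nonempty)
    (hAcp : ∀ x ∈ K \ O, IsCompact (Amap x))
    -- upper hemicontinuity of `x ↦ A(x)` on `K ∖ O`
    (hAuh : ∀ x ∈ K \ O, ∀ U : Set A, IsOpen U → Amap x ⊆ U →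
      ∃ V : Set X, IsOpen V ∧ x ∈ V ∧ ∀ z ∈ (K \ O) ∩ V, Amap z ⊆ U)
    -- weak measurability of `x ↦ A(x)` on `K ∖ O`
    (hAwm : ∀ G : Set A, IsOpen G → MeasurableSet {x | x ∈ K \ O ∧ (Amap x ∩ G).Nonempty})
    (Q : X → A → Measure X)
    (hQprob : ∀ x ∈ K \ O, ∀ a ∈ Amap x, IsProbabilityMeasure (Q x a))
    (hQmeas : ∀ B : Set X, MeasurableSet B →
      Measurable fun p : {p : X × A // p.1 ∈ K \ O ∧ p.2 ∈ Amap p.1} => Q p.1.1 p.1.2 B)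
    -- strong Feller property of `Q` on `𝕂`
    (hQfeller : ∀ g : X → ℝ, Measurable g → (∃ C, ∀ y, |g y| ≤ C) →
      ContinuousOn (fun p : X × A => ∫ y, g y ∂(Q p.1 p.2))
        {p : X × A | p.1 ∈ K \ O ∧ p.2 ∈ Amap p.1})
 :
    -- the supremum defining `T vₙ (x)` is attained for every `n` and `x ∈ K ∖ O`
    (∀ n : ℕ, ∀ x ∈ K \ O, ∃ a ∈ Amap x,
      (∫ y, K.indicator (viter O K Amap Q n) y ∂(Q x a)) =
        sSup ((fun a => ∫ y, K.indicator (viter O K Amap Q n) y ∂(Q x a)) '' Amap x)) ∧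
    (∀ n : ℕ, Measurable (viter O K Amap Q n)) ∧
    (∀ n : ℕ, ∀ x, 0 ≤ viter O K Amap Q n x) ∧
    (∀ n : ℕ, ∀ x, viter O K Amap Q n x ≤ 1) ∧
    (∀ n : ℕ, ∀ x, viter O K Amap Q n x ≤ viter O K Amap Q (n + 1) x) ∧
    -- the pointwise limit `v⋆` exists and satisfies the Bellman equation, with attained max
    (∃ vstar : X → ℝ,
      (∀ x, Filter.Tendsto (fun n => viter O K Amap Q n x) Filter.atTop (nhds (vstar x))) ∧
      (∀ x, vstar x = O.indicator (1 : X → ℝ) x +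
        (K \ O).indicator
          (fun x' => sSup ((fun a => ∫ y, K.indicator vstar y ∂(Q x' a)) '' Amap x')) x) ∧
      (∀ x ∈ K \ O, ∃ a ∈ Amap x,
        (∫ y, K.indicator vstar y ∂(Q x a)) =
          sSup ((fun a => ∫ y, K.indicator vstar y ∂(Q x a)) '' Amap x))) := by
  set v := viter O K Amap Q with hv
  -- continuity of the integral map for bounded measurable u
  have hbound : ∀ (u : X → ℝ), (∀ y, 0 ≤ u y) → (∀ y, u y ≤ 1) → ∀ y, |K.indicator u y| ≤ 1 := by
    intro u h0 h1 y
    by_cases hy : y ∈ K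
    · rw [indicator_of_mem hy, abs_le]; exact ⟨by linarith [h0 y], h1 y⟩
    · rw [indicator_of_notMem hy]; simp
  have hcont : ∀ u : X → ℝ, Measurable u → (∀ y, 0 ≤ u y) → (∀ y, u y ≤ 1) →
      ContinuousOn (fun p : X × A => ∫ y, K.indicator u y ∂(Q p.1 p.2))
        {p : X × A | p.1 ∈ K \ O ∧ p.2 ∈ Amap p.1} := fun u hu h0 h1 =>
    hQfeller (K.indicator u) (hu.indicator hmK) ⟨1, hbound u h0 h1⟩
  have hint : ∀ u : X → ℝ, Measurable u → (∀ y, 0 ≤ u y) → (∀ y, u y ≤ 1) →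
      ∀ x ∈ K \ O, ∀ a ∈ Amap x, Integrable (K.indicator u) (Q x a) := by
    intro u hu h0 h1 x hx a ha
    haveI := hQprob x hx a ha
    exact ⟨(hu.indicator hmK).aestronglyMeasurable,
      HasFiniteIntegral.of_bounded (C := 1) (ae_of_all _ fun y => by
        rw [Real.norm_eq_abs]; exact hbound u h0 h1 y)⟩
  have hIof : ∀ u : X → ℝ, (∀ y, 0 ≤ u y) → ∀ x a, 0 ≤ ∫ y, K.indicator u y ∂(Q x a) :=
    fun u h0 x a => integral_nonneg fun y => indicator_nonneg (fun y _ => h0 y) y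
  have hI1 : ∀ u : X → ℝ, Measurable u → (∀ y, 0 ≤ u y) → (∀ y, u y ≤ 1) →
      ∀ x ∈ K \ O, ∀ a ∈ Amap x, (∫ y, K.indicator u y ∂(Q x a)) ≤ 1 := by
    intro u hu h0 h1 x hx a ha
    haveI := hQprob x hx a ha
    calc (∫ y, K.indicator u y ∂(Q x a)) ≤ ∫ _, (1:ℝ) ∂(Q x a) := by
          refine integral_mono (hint u hu h0 h1 x hx a ha) (integrable_const 1) fun y => ?_
          by_cases hy : y ∈ K
          · rw [indicator_of_mem hy]; exact h1 y
          · rw [indicator_of_notMem hy]; norm_num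
      _ = 1 := by simp
  have hbdd : ∀ u : X → ℝ, Measurable u → (∀ y, 0 ≤ u y) → (∀ y, u y ≤ 1) →
      ∀ x ∈ K \ O, BddAbove ((fun a => ∫ y, K.indicator u y ∂(Q x a)) '' Amap x) := by
    intro u hu h0 h1 x hx
    exact ⟨1, by rintro r ⟨a, ha, rfl⟩; exact hI1 u hu h0 h1 x hx a ha⟩
  have hs0 : ∀ u : X → ℝ, Measurable u → (∀ y, 0 ≤ u y) → (∀ y, u y ≤ 1) →
      ∀ x ∈ K \ O, 0 ≤ sSup ((fun a => ∫ y, K.indicator u y ∂(Q x a)) '' Amap x) := by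
    intro u hu h0 h1 x hx
    obtain ⟨a0, ha0⟩ := hAne x hx
    exact le_trans (hIof u h0 x a0) (le_csSup (hbdd u hu h0 h1 x hx) ⟨a0, ha0, rfl⟩)
  have hs1 : ∀ u : X → ℝ, Measurable u → (∀ y, 0 ≤ u y) → (∀ y, u y ≤ 1) →
      ∀ x ∈ K \ O, sSup ((fun a => ∫ y, K.indicator u y ∂(Q x a)) '' Amap x) ≤ 1 := by
    intro u hu h0 h1 x hx
    exact csSup_le ((hAne x hx).image _) (by rintro r ⟨a, ha, rfl⟩; exact hI1 u hu h0 h1 x hx a ha)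
  -- measurability and bounds, by induction
  have hMB : ∀ n, Measurable (v n) ∧ (∀ x, 0 ≤ v n x) ∧ (∀ x, v n x ≤ 1) := by
    intro n
    induction n with
    | zero =>
      refine ⟨measurable_one.indicator hmO, fun x => indicator_nonneg (fun _ _ => zero_le_one) x,
        fun x => ?_⟩
      show O.indicator (1 : X → ℝ) x ≤ 1
      by_cases hx : x ∈ O
      · rw [indicator_of_mem hx]; norm_num
      · rw [indicator_of_notMem hx]; norm_num
    | succ n ih =>
      obtain ⟨hmn, h0n, h1n⟩ := ih
      have hcn := hcont (v n) hmn h0n h1n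
      refine ⟨?_, fun x => ?_, fun x => ?_⟩
      · show Measurable (dpOp O K Amap Q (v n))
        unfold dpOp
        refine Measurable.add (measurable_one.indicator hmO) ?_
        exact usc_meas (hmK.diff hmO) hAne hAcp hAuh hcn
      · show (0:ℝ) ≤ dpOp O K Amap Q (v n) x
        unfold dpOp
        have t1 : (0:ℝ) ≤ O.indicator (1 : X → ℝ) x := indicator_nonneg (fun _ _ => zero_le_one) x
        have t2 : (0:ℝ) ≤ (K \ O).indicator
            (fun x' => sSup ((fun a => ∫ y, K.indicator (v n) y ∂(Q x' a)) '' Amap x')) x :=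
          indicator_nonneg (fun x' hx' => hs0 (v n) hmn h0n h1n x' hx') x
        linarith
      · show dpOp O K Amap Q (v n) x ≤ 1
        unfold dpOp
        by_cases hO : x ∈ O
        · have hxn : x ∉ K \ O := fun h => h.2 hO
          rw [indicator_of_mem hO, indicator_of_notMem hxn]
          simp
        · rw [indicator_of_notMem hO]
          by_cases hx : x ∈ K \ O
          · rw [indicator_of_mem hx]
            simpa using hs1 (v n) hmn h0n h1n x hx
          · rw [indicator_of_notMem hx]; norm_num
  -- monotonicity
  have hptmono : ∀ (u w : X → ℝ), Measurable u → (∀ y, 0 ≤ u y) → (∀ y, u y ≤ 1) →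
      Measurable w → (∀ y, 0 ≤ w y) → (∀ y, w y ≤ 1) → (∀ y, u y ≤ w y) →
      ∀ x ∈ K \ O,
      sSup ((fun a => ∫ y, K.indicator u y ∂(Q x a)) '' Amap x) ≤
        sSup ((fun a => ∫ y, K.indicator w y ∂(Q x a)) '' Amap x) := by
    intro u w hu h0u h1u hw h0w h1w hle x hx
    refine csSup_le ((hAne x hx).image _) ?_
    rintro r ⟨a, ha, rfl⟩
    refine le_trans (integral_mono (hint u hu h0u h1u x hx a ha)
      (hint w hw h0w h1w x hx a ha) fun y => ?_) (le_csSup (hbdd w hw h0w h1w x hx) ⟨a, ha, rfl⟩)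
    by_cases hy : y ∈ K
    · rw [indicator_of_mem hy, indicator_of_mem hy]; exact hle y
    · rw [indicator_of_notMem hy, indicator_of_notMem hy]
  have hmono : ∀ n x, v n x ≤ v (n + 1) x := by
    intro n
    induction n with
    | zero =>
      intro x
      show O.indicator (1 : X → ℝ) x ≤ dpOp O K Amap Q (v 0) x
      unfold dpOp
      have t2 : (0:ℝ) ≤ (K \ O).indicator
          (fun x' => sSup ((fun a => ∫ y, K.indicator (v 0) y ∂(Q x' a)) '' Amap x')) x :=
        indicator_nonneg (fun x' hx' => hs0 (v 0) (hMB 0).1 (hMB 0).2.1 (hMB 0).2.2 x' hx') x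
      linarith
    | succ n ih =>
      intro x
      show dpOp O K Amap Q (v n) x ≤ dpOp O K Amap Q (v (n + 1)) x
      unfold dpOp
      by_cases hx : x ∈ K \ O
      · rw [indicator_of_mem hx, indicator_of_mem hx]
        have := hptmono (v n) (v (n + 1)) (hMB n).1 (hMB n).2.1 (hMB n).2.2
          (hMB (n + 1)).1 (hMB (n + 1)).2.1 (hMB (n + 1)).2.2 ih x hx
        linarith
      · rw [indicator_of_notMem hx, indicator_of_notMem hx]
  -- the limit
  set vs : X → ℝ := fun x => ⨆ n, v n x with hvsdef
  have hMone : ∀ x, Monotone fun n => v n x := fun x => monotone_nat_of_le_succ fun n => hmono n x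
  have hBdd : ∀ x, BddAbove (range fun n => v n x) :=
    fun x => ⟨1, by rintro r ⟨n, rfl⟩; exact (hMB n).2.2 x⟩
  have htend : ∀ x, Tendsto (fun n => v n x) atTop (𝓝 (vs x)) :=
    fun x => tendsto_atTop_ciSup (hMone x) (hBdd x)
  have hvsm : Measurable vs :=
    measurable_of_tendsto_metrizable (fun n => (hMB n).1) (tendsto_pi_nhds.2 htend)
  have hvs0 : ∀ x, 0 ≤ vs x := fun x => le_trans ((hMB 0).2.1 x) (le_ciSup (hBdd x) 0)
  have hvs1 : ∀ x, vs x ≤ 1 := fun x => ciSup_le fun n => (hMB n).2.2 x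
  -- attainment
  have hatt : ∀ (u : X → ℝ), Measurable u → (∀ y, 0 ≤ u y) → (∀ y, u y ≤ 1) → ∀ x ∈ K \ O,
      ∃ a ∈ Amap x, (∫ y, K.indicator u y ∂(Q x a)) =
        sSup ((fun a => ∫ y, K.indicator u y ∂(Q x a)) '' Amap x) := by
    intro u hu h0 h1 x hx
    obtain ⟨a, ha, hEq⟩ := attain (hcont u hu h0 h1) hx (hAne x hx) (hAcp x hx)
    exact ⟨a, ha, hEq⟩
  -- Bellman equation
  have hbell : ∀ x, vs x = O.indicator (1 : X → ℝ) x +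
      (K \ O).indicator
        (fun x' => sSup ((fun a => ∫ y, K.indicator vs y ∂(Q x' a)) '' Amap x')) x := by
    intro x
    by_cases hO : x ∈ O
    · have hxn : x ∉ K \ O := fun h => h.2 hO
      have hvconst : ∀ n, v n x = 1 := by
        intro n
        cases n with
        | zero =>
          show O.indicator (1 : X → ℝ) x = 1
          rw [indicator_of_mem hO]; rfl
        | succ n =>
          show dpOp O K Amap Q (v n) x = 1
          unfold dpOp
          rw [indicator_of_mem hO, indicator_of_notMem hxn]
          simp
      have htc : Tendsto (fun n => v n x) atTop (𝓝 1) := by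
        simp only [hvconst]; exact tendsto_const_nhds
      rw [indicator_of_mem hO, indicator_of_notMem hxn, tendsto_nhds_unique (htend x) htc]
      simp
    · by_cases hK : x ∈ K \ O
      · -- main case
        have hFa : ∀ a ∈ Amap x, Tendsto (fun n => ∫ y, K.indicator (v n) y ∂(Q x a)) atTop
            (𝓝 (∫ y, K.indicator vs y ∂(Q x a))) := by
          intro a ha
          haveI := hQprob x hK a ha
          refine tendsto_integral_of_dominated_convergence (fun _ => (1:ℝ))
            (fun n => ((hMB n).1.indicator hmK).aestronglyMeasurable) (integrable_const 1)
            (fun n => ae_of_all _ fun y => ?_) (ae_of_all _ fun y => ?_)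
          · rw [Real.norm_eq_abs]; exact hbound (v n) (hMB n).2.1 (hMB n).2.2 y
          · by_cases hy : y ∈ K
            · simp only [indicator_of_mem hy]; exact htend y
            · simp only [indicator_of_notMem hy]; exact tendsto_const_nhds
        set sn : ℕ → ℝ := fun n => sSup ((fun a => ∫ y, K.indicator (v n) y ∂(Q x a)) '' Amap x)
          with hsn
        set s : ℝ := sSup ((fun a => ∫ y, K.indicator vs y ∂(Q x a)) '' Amap x) with hsdef
        have hsnle : ∀ n, sn n ≤ s := fun n =>
          hptmono (v n) vs (hMB n).1 (hMB n).2.1 (hMB n).2.2 hvsm hvs0 hvs1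
            (fun y => le_ciSup (hBdd y) n) x hK
        have hsnmono : Monotone sn := monotone_nat_of_le_succ fun n =>
          hptmono (v n) (v (n + 1)) (hMB n).1 (hMB n).2.1 (hMB n).2.2
            (hMB (n + 1)).1 (hMB (n + 1)).2.1 (hMB (n + 1)).2.2 (hmono n) x hK
        have hsnbdd : BddAbove (range sn) := ⟨s, by rintro r ⟨n, rfl⟩; exact hsnle n⟩
        have hsnt : Tendsto sn atTop (𝓝 (⨆ n, sn n)) := tendsto_atTop_ciSup hsnmono hsnbdd
        have hLles : (⨆ n, sn n) ≤ s := ciSup_le hsnle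
        have hsleL : s ≤ ⨆ n, sn n := by
          refine csSup_le ((hAne x hK).image _) ?_
          rintro r ⟨a, ha, rfl⟩
          refine le_of_tendsto (hFa a ha) (Eventually.of_forall fun n => ?_)
          exact le_trans (le_csSup (hbdd (v n) (hMB n).1 (hMB n).2.1 (hMB n).2.2 x hK)
            ⟨a, ha, rfl⟩) (le_ciSup hsnbdd n)
        have hL : (⨆ n, sn n) = s := le_antisymm hLles hsleL
        have hvx : ∀ n, v (n + 1) x = sn n := by
          intro n
          show dpOp O K Amap Q (v n) x = sn n
          unfold dpOp
          rw [indicator_of_notMem hO, indicator_of_mem hK]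
          simp [hsn]
        have ht2 : Tendsto (fun n => v (n + 1) x) atTop (𝓝 (vs x)) :=
          (htend x).comp (tendsto_add_atTop_nat 1)
        have ht3 : Tendsto (fun n => v (n + 1) x) atTop (𝓝 (⨆ n, sn n)) := by
          simp only [hvx]; exact hsnt
        have hvse : vs x = s := by rw [← hL]; exact tendsto_nhds_unique ht2 ht3
        rw [indicator_of_notMem hO, indicator_of_mem hK, hvse]
        simp [hsdef]
      · -- x ∉ K
        have hvzero : ∀ n, v n x = 0 := by
          intro n
          cases n with
          | zero =>
            show O.indicator (1 : X → ℝ) x = 0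
            rw [indicator_of_notMem hO]
          | succ n =>
            show dpOp O K Amap Q (v n) x = 0
            unfold dpOp
            rw [indicator_of_notMem hO, indicator_of_notMem hK]
            simp
        have htc : Tendsto (fun n => v n x) atTop (𝓝 0) := by
          simp only [hvzero]; exact tendsto_const_nhds
        rw [indicator_of_notMem hO, indicator_of_notMem hK, tendsto_nhds_unique (htend x) htc]
        simp
  exact ⟨fun n x hx => hatt (v n) (hMB n).1 (hMB n).2.1 (hMB n).2.2 x hx,
    fun n => (hMB n).1, fun n x => (hMB n).2.1 x, fun n x => (hMB n).2.2 x,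
    fun n x => hmono n x,
    ⟨vs, htend, hbell, fun x hx => hatt vs hvsm hvs0 hvs1 x hx⟩⟩
end

section
/- For every Borel measurable u: X→[0,1] with u = 0 on X∖K, the function Tu is Borel measurable, satisfies 0 ≤ Tu ≤ 1 on X and Tu = 0 on X∖K, the supremum defining Tu(x) is attained for each x ∈ K∖O, and there exists a Borel measurable selector f: K∖O → A with f(x) ∈ A(x) for all x ∈ K∖O such that Tu(x) = ∫_X 1_K(y) u(y) Q(dy|x, f(x)) for every x ∈ K∖O. -/
open MeasureTheory Set Filter Topology


open scoped Classical

section KRNsel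
open Metric
variable {S A : Type*} [MeasurableSpace S] [MetricSpace A]

structure KRNData (M : S → Set A) (u : ℕ → A) (k : ℕ) where
  g : S → ℕ
  meas : Measurable g
  inv : ∀ s, (M s ∩ closedBall (u (g s)) ((1/2 : ℝ)^k)).Nonempty

variable {M : S → Set A} {u : ℕ → A}

lemma krn_ex (hu : DenseRange u) {k : ℕ} (p : KRNData M u k) (s : S) :
    ∃ n, (M s ∩ closedBall (u n) ((1/2:ℝ)^(k+1)) ∩ closedBall (u (p.g s)) ((1/2:ℝ)^k)).Nonempty := by
  obtain ⟨c, hcM, hcb⟩ := p.inv s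
  obtain ⟨n, hn⟩ := Metric.denseRange_iff.mp hu c ((1/2:ℝ)^(k+1)) (by positivity)
  refine ⟨n, c, ⟨hcM, ?_⟩, hcb⟩
  rw [Metric.mem_closedBall]
  exact hn.le

noncomputable def krnStep (hu : DenseRange u)
    (hmeas : ∀ C : Set A, IsClosed C → MeasurableSet {s | (M s ∩ C).Nonempty})
    {k : ℕ} (p : KRNData M u k) : KRNData M u (k+1) where
  g s := Nat.find (krn_ex hu p s)
  meas := by
    apply measurable_find
    intro n
    have heq : {s | (M s ∩ closedBall (u n) ((1/2:ℝ)^(k+1)) ∩ closedBall (u (p.g s)) ((1/2:ℝ)^k)).Nonempty}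
        = ⋃ m, ({s | p.g s = m} ∩
            {s | (M s ∩ (closedBall (u n) ((1/2:ℝ)^(k+1)) ∩ closedBall (u m) ((1/2:ℝ)^k))).Nonempty}) := by
      ext s
      simp only [mem_setOf_eq, mem_iUnion, mem_inter_iff]
      constructor
      · rintro ⟨c, ⟨⟨h1, h2⟩, h3⟩⟩
        exact ⟨p.g s, rfl, c, h1, h2, h3⟩
      · rintro ⟨m, hm, c, h1, h2, h3⟩
        exact ⟨c, ⟨h1, h2⟩, hm ▸ h3⟩
    rw [heq]
    exact MeasurableSet.iUnion fun m =>
      (p.meas (measurableSet_singleton m)).inter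
        (hmeas _ (Metric.isClosed_closedBall.inter Metric.isClosed_closedBall))
  inv s := by
    obtain ⟨c, ⟨⟨hcM, hcb⟩, _⟩⟩ := Nat.find_spec (krn_ex hu p s)
    exact ⟨c, hcM, hcb⟩

lemma krnStep_dist (hu : DenseRange u)
    (hmeas : ∀ C : Set A, IsClosed C → MeasurableSet {s | (M s ∩ C).Nonempty})
    {k : ℕ} (p : KRNData M u k) (s : S) :
    dist (u ((krnStep hu hmeas p).g s)) (u (p.g s)) ≤ (1/2:ℝ)^(k+1) + (1/2:ℝ)^k := by
  obtain ⟨c, ⟨⟨_, hc1⟩, hc2⟩⟩ := Nat.find_spec (krn_ex hu p s)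
  rw [Metric.mem_closedBall] at hc1 hc2
  calc dist (u ((krnStep hu hmeas p).g s)) (u (p.g s))
      ≤ dist (u ((krnStep hu hmeas p).g s)) c + dist c (u (p.g s)) := dist_triangle _ _ _
    _ ≤ (1/2:ℝ)^(k+1) + (1/2:ℝ)^k := by
        have : dist (u ((krnStep hu hmeas p).g s)) c = dist c (u ((krnStep hu hmeas p).g s)) :=
          dist_comm _ _
        rw [this]
        exact add_le_add hc1 hc2

noncomputable def krnChain (hu : DenseRange u)
    (hmeas : ∀ C : Set A, IsClosed C → MeasurableSet {s | (M s ∩ C).Nonempty})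
    (p0 : KRNData M u 0) : ∀ k : ℕ, KRNData M u k :=
  fun k => Nat.rec p0 (fun _ q => krnStep hu hmeas q) k

theorem krn_selection [MeasurableSpace A] [BorelSpace A] [CompleteSpace A]
    [TopologicalSpace.SeparableSpace A] [Nonempty A]
    (M : S → Set A) (hne : ∀ s, (M s).Nonempty) (hcl : ∀ s, IsClosed (M s))
    (hmeas : ∀ C : Set A, IsClosed C → MeasurableSet {s | (M s ∩ C).Nonempty}) :
    ∃ f : S → A, Measurable f ∧ ∀ s, f s ∈ M s := by
  classical
  obtain ⟨u, hu⟩ := TopologicalSpace.exists_dense_seq A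
  have ex0 : ∀ s : S, ∃ n, (M s ∩ closedBall (u n) ((1/2:ℝ)^0)).Nonempty := by
    intro s
    obtain ⟨c, hc⟩ := hne s
    obtain ⟨n, hn⟩ := Metric.denseRange_iff.mp hu c ((1/2:ℝ)^0) (by norm_num)
    exact ⟨n, c, hc, by rw [Metric.mem_closedBall]; exact hn.le⟩
  set p0 : KRNData M u 0 :=
    { g := fun s => Nat.find (ex0 s)
      meas := measurable_find ex0 fun n => hmeas _ Metric.isClosed_closedBall
      inv := fun s => Nat.find_spec (ex0 s) } with hp0
  set P : ∀ k : ℕ, KRNData M u k := krnChain hu hmeas p0 with hP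
  have hPsucc : ∀ k, P (k+1) = krnStep hu hmeas (P k) := fun k => rfl
  set seq : ℕ → S → A := fun k s => u ((P k).g s) with hseq
  have hdist : ∀ k s, dist (seq k s) (seq (k+1) s) ≤ 2 * (1/2:ℝ)^k := by
    intro k s
    rw [dist_comm]
    have := krnStep_dist hu hmeas (P k) s
    rw [← hPsucc k] at this
    calc dist (seq (k+1) s) (seq k s) ≤ (1/2:ℝ)^(k+1) + (1/2:ℝ)^k := this
      _ ≤ 2 * (1/2:ℝ)^k := by
          have h := pow_succ (1/2:ℝ) k
          have h2 := pow_nonneg (by norm_num : (0:ℝ) ≤ 1/2) k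
          nlinarith
  have hcauchy : ∀ s, CauchySeq (fun k => seq k s) :=
    fun s => cauchySeq_of_le_geometric (1/2) 2 (by norm_num) (fun n => hdist n s)
  have hconv : ∀ s, ∃ l, Tendsto (fun k => seq k s) atTop (𝓝 l) :=
    fun s => cauchySeq_tendsto_of_complete (hcauchy s)
  choose f hf using hconv
  have hfm : Measurable f := by
    refine measurable_of_tendsto_metrizable (fun k => ?_) (tendsto_pi_nhds.mpr hf)
    exact (measurable_from_nat (f := u)).comp (P k).meas
  refine ⟨f, hfm, fun s => ?_⟩
  -- witnesses in M s approaching f s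
  have hw : ∀ k, ∃ c ∈ M s, dist c (seq k s) ≤ (1/2:ℝ)^k := by
    intro k
    obtain ⟨c, hcM, hcb⟩ := (P k).inv s
    exact ⟨c, hcM, Metric.mem_closedBall.mp hcb⟩
  choose c hcM hcd using hw
  have hct : Tendsto c atTop (𝓝 (f s)) := by
    rw [tendsto_iff_dist_tendsto_zero]
    have h1 : Tendsto (fun k => (1/2:ℝ)^k + dist (seq k s) (f s)) atTop (𝓝 0) := by
      have : Tendsto (fun k => dist (seq k s) (f s)) atTop (𝓝 0) :=
        tendsto_iff_dist_tendsto_zero.mp (hf s)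
      simpa using (tendsto_pow_atTop_nhds_zero_of_lt_one (r := (1/2:ℝ)) (by norm_num) (by norm_num)).add this
    refine squeeze_zero (fun k => dist_nonneg) (fun k => ?_) h1
    exact (dist_triangle _ _ _).trans (add_le_add_left (hcd k) _)
  exact (hcl s).mem_of_tendsto hct (Eventually.of_forall hcM)

end KRNsel



lemma rect_meas {X A : Type*} [TopologicalSpace X] [MeasurableSpace X] [OpensMeasurableSpace X]
    [SecondCountableTopology X] [TopologicalSpace A] [SecondCountableTopology A]
    (D : Set X) (Amap : X → Set A)
    (hAwm : ∀ G : Set A, IsOpen G → MeasurableSet {x | x ∈ D ∧ (Amap x ∩ G).Nonempty})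
    (U : Set (X × A)) (hU : IsOpen U) :
    MeasurableSet {x | x ∈ D ∧ ∃ a ∈ Amap x, (x, a) ∈ U} := by
  obtain ⟨bX, hbXc, -, hbX⟩ := TopologicalSpace.exists_countable_basis X
  obtain ⟨bA, hbAc, -, hbA⟩ := TopologicalSpace.exists_countable_basis A
  set I : Set (Set X × Set A) := {q | q.1 ∈ bX ∧ q.2 ∈ bA ∧ q.1 ×ˢ q.2 ⊆ U} with hI
  have hIc : I.Countable := by
    refine (hbXc.prod hbAc).mono ?_
    rintro ⟨V, G⟩ ⟨h1, h2, -⟩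
    exact ⟨h1, h2⟩
  have heq : {x | x ∈ D ∧ ∃ a ∈ Amap x, (x, a) ∈ U}
      = ⋃ q ∈ I, ({x | x ∈ D ∧ (Amap x ∩ q.2).Nonempty} ∩ q.1) := by
    ext x
    simp only [mem_setOf_eq, mem_iUnion, mem_inter_iff, exists_prop]
    constructor
    · rintro ⟨hxD, a, haA, haU⟩
      obtain ⟨t, ht, hxt, htU⟩ := (hbX.prod hbA).exists_subset_of_mem_open haU hU
      obtain ⟨V, hV, G, hG, rfl⟩ := ht
      exact ⟨⟨V, G⟩, ⟨hV, hG, htU⟩, ⟨hxD, a, haA, hxt.2⟩, hxt.1⟩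
    · rintro ⟨⟨V, G⟩, ⟨hV, hG, hsub⟩, ⟨hxD, a, haA, haG⟩, hxV⟩
      exact ⟨hxD, a, haA, hsub ⟨hxV, haG⟩⟩
  rw [heq]
  refine MeasurableSet.biUnion hIc ?_
  rintro ⟨V, G⟩ ⟨hV, hG, -⟩
  exact (hAwm G (hbA.isOpen hG)).inter (hbX.isOpen hV).measurableSet


theorem stmt1 {X A : Type*}
    [TopologicalSpace X] [PolishSpace X] [MeasurableSpace X] [BorelSpace X]
    [TopologicalSpace A] [PolishSpace A] [MeasurableSpace A] [BorelSpace A]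
    (O K : Set X) (hOne : O.Nonempty) (hKne : K.Nonempty)
    (hmO : MeasurableSet O) (hmK : MeasurableSet K) (hOK : O ⊂ K)
    (Amap : X → Set A)
    (hAne : ∀ x ∈ K \ O, (Amap x).Nonempty)
    (hAcp : ∀ x ∈ K \ O, IsCompact (Amap x))
    -- upper hemicontinuity of `x ↦ A(x)` on `K ∖ O`
    (hAuh : ∀ x ∈ K \ O, ∀ U : Set A, IsOpen U → Amap x ⊆ U →
      ∃ V : Set X, IsOpen V ∧ x ∈ V ∧ ∀ z ∈ (K \ O) ∩ V, Amap z ⊆ U)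
    -- weak measurability of `x ↦ A(x)` on `K ∖ O`
    (hAwm : ∀ G : Set A, IsOpen G → MeasurableSet {x | x ∈ K \ O ∧ (Amap x ∩ G).Nonempty})
    (Q : X → A → Measure X)
    (hQprob : ∀ x ∈ K \ O, ∀ a ∈ Amap x, IsProbabilityMeasure (Q x a))
    (hQmeas : ∀ B : Set X, MeasurableSet B →
      Measurable fun p : {p : X × A // p.1 ∈ K \ O ∧ p.2 ∈ Amap p.1} => Q p.1.1 p.1.2 B)
    -- strong Feller property of `Q` on `𝕂`
    (hQfeller : ∀ g : X → ℝ, Measurable g → (∃ C, ∀ y, |g y| ≤ C) →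
      ContinuousOn (fun p : X × A => ∫ y, g y ∂(Q p.1 p.2))
        {p : X × A | p.1 ∈ K \ O ∧ p.2 ∈ Amap p.1})
    (u : X → ℝ) (humeas : Measurable u) (hu0 : ∀ x, 0 ≤ u x) (hu1 : ∀ x, u x ≤ 1)
    (huK : ∀ x ∉ K, u x = 0) :
    Measurable (dpOp O K Amap Q u) ∧
    (∀ x, 0 ≤ dpOp O K Amap Q u x) ∧ (∀ x, dpOp O K Amap Q u x ≤ 1) ∧
    (∀ x ∉ K, dpOp O K Amap Q u x = 0) ∧
    (∀ x ∈ K \ O, ∃ a ∈ Amap x,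
      (∫ y, K.indicator u y ∂(Q x a)) =
        sSup ((fun a => ∫ y, K.indicator u y ∂(Q x a)) '' Amap x)) ∧
    (∃ f : {x : X // x ∈ K \ O} → A, Measurable f ∧
      (∀ x : {x : X // x ∈ K \ O}, f x ∈ Amap x.1) ∧
      ∀ x : {x : X // x ∈ K \ O},
        dpOp O K Amap Q u x.1 = ∫ y, K.indicator u y ∂(Q x.1 (f x))) := by
  classical
  obtain ⟨x₀, hx₀K, hx₀O⟩ := exists_of_ssubset hOK
  have hAnonempty : Nonempty A := ⟨(hAne x₀ ⟨hx₀K, hx₀O⟩).some⟩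
  have hgm : Measurable (K.indicator u) := humeas.indicator hmK
  have hgb : ∀ y, |K.indicator u y| ≤ 1 := by
    intro y
    rw [abs_le]
    by_cases hy : y ∈ K <;> simp [Set.indicator_apply, hy]
    · exact ⟨by linarith [hu0 y], hu1 y⟩
  set w : X × A → ℝ := fun p => ∫ y, K.indicator u y ∂(Q p.1 p.2) with hwdef
  set KK : Set (X × A) := {p : X × A | p.1 ∈ K \ O ∧ p.2 ∈ Amap p.1} with hKKdef
  have hwcont : ContinuousOn w KK := hQfeller _ hgm ⟨1, hgb⟩
  have hind0 : ∀ y, 0 ≤ K.indicator u y := fun y => Set.indicator_nonneg (fun y _ => hu0 y) y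
  have hw0 : ∀ x ∈ K \ O, ∀ a ∈ Amap x, 0 ≤ w (x, a) := by
    intro x hx a ha
    exact integral_nonneg hind0
  have hw1 : ∀ x ∈ K \ O, ∀ a ∈ Amap x, w (x, a) ≤ 1 := by
    intro x hx a ha
    haveI := hQprob x hx a ha
    calc w (x, a) ≤ ∫ _, (1:ℝ) ∂(Q x a) := by
          refine integral_mono_of_nonneg (Eventually.of_forall hind0) (integrable_const 1)
            (Eventually.of_forall fun y => ?_)
          exact (abs_le.mp (hgb y)).2
      _ = 1 := by simp
  have hslice : ∀ x ∈ K \ O, ContinuousOn (fun a => w (x, a)) (Amap x) := by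
    intro x hx a ha
    have h1 : ContinuousWithinAt w KK (x, a) := hwcont (x, a) ⟨hx, ha⟩
    have h2 : ContinuousWithinAt (fun b : A => ((x, b) : X × A)) (Amap x) a :=
      Continuous.continuousWithinAt (by fun_prop)
    exact h1.comp h2 (fun b hb => ⟨hx, hb⟩)
  have hattain : ∀ x, x ∈ K \ O → ∃ a ∈ Amap x, ∀ b ∈ Amap x, w (x, b) ≤ w (x, a) := by
    intro x hx
    obtain ⟨a, ha, hmax⟩ := (hAcp x hx).exists_isMaxOn (hAne x hx) (hslice x hx)
    exact ⟨a, ha, fun b hb => hmax hb⟩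
  set v : X → ℝ := fun x => sSup ((fun a => w (x, a)) '' Amap x) with hvdef
  have hbdd : ∀ x ∈ K \ O, BddAbove ((fun a => w (x, a)) '' Amap x) := by
    intro x hx
    refine ⟨1, ?_⟩
    rintro b ⟨a, ha, rfl⟩
    exact hw1 x hx a ha
  have hvattain : ∀ x, x ∈ K \ O → ∃ a ∈ Amap x, w (x, a) = v x := by
    intro x hx
    obtain ⟨a, ha, hmax⟩ := hattain x hx
    have hgr : IsGreatest ((fun a => w (x, a)) '' Amap x) (w (x, a)) := by
      constructor
      · exact ⟨a, ha, rfl⟩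
      · rintro b ⟨a', ha', rfl⟩
        exact hmax a' ha'
    exact ⟨a, ha, hgr.csSup_eq.symm⟩
  have hv0 : ∀ x ∈ K \ O, 0 ≤ v x := by
    intro x hx
    obtain ⟨a, ha, he⟩ := hvattain x hx
    rw [← he]; exact hw0 x hx a ha
  have hv1 : ∀ x ∈ K \ O, v x ≤ 1 := by
    intro x hx
    obtain ⟨a, ha, he⟩ := hvattain x hx
    rw [← he]; exact hw1 x hx a ha
  have hvgt : ∀ x ∈ K \ O, ∀ c : ℝ, (c < v x ↔ ∃ a ∈ Amap x, c < w (x, a)) := by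
    intro x hx c
    constructor
    · intro h
      obtain ⟨a, ha, he⟩ := hvattain x hx
      exact ⟨a, ha, he ▸ h⟩
    · rintro ⟨a, ha, h⟩
      exact h.trans_le (le_csSup (hbdd x hx) ⟨a, ha, rfl⟩)
  -- measurability of the sets E(G, c)
  have hE : ∀ G : Set A, IsOpen G → ∀ c : ℝ,
      MeasurableSet {x | x ∈ K \ O ∧ ∃ a ∈ Amap x, a ∈ G ∧ c < w (x, a)} := by
    intro G hG c
    obtain ⟨U₀, hU₀o, hU₀⟩ := (_root_.continuousOn_iff'.mp hwcont) (Ioi c) isOpen_Ioi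
    have hkey : {x | x ∈ K \ O ∧ ∃ a ∈ Amap x, a ∈ G ∧ c < w (x, a)}
        = {x | x ∈ K \ O ∧ ∃ a ∈ Amap x, (x, a) ∈ U₀ ∩ (univ ×ˢ G)} := by
      ext x
      simp only [mem_setOf_eq]
      refine and_congr_right fun hx => ?_
      refine exists_congr fun a => ?_
      refine and_congr_right fun ha => ?_
      have hmem : (x, a) ∈ KK := ⟨hx, ha⟩
      have h1 : (x, a) ∈ w ⁻¹' Ioi c ∩ KK ↔ (x, a) ∈ U₀ ∩ KK := by rw [hU₀]
      constructor
      · rintro ⟨haG, hc⟩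
        exact ⟨(h1.mp ⟨hc, hmem⟩).1, ⟨trivial, haG⟩⟩
      · rintro ⟨hU, ⟨-, haG⟩⟩
        exact ⟨haG, (h1.mpr ⟨hU, hmem⟩).1⟩
    rw [hkey]
    exact rect_meas (K \ O) Amap hAwm _ (hU₀o.inter (isOpen_univ.prod hG))
  -- measurability of the value function on the subtype
  have hvS : Measurable (fun s : {x : X // x ∈ K \ O} => v s.1) := by
    apply measurable_of_Ioi
    intro c
    have hpre : (fun s : {x : X // x ∈ K \ O} => v s.1) ⁻¹' Ioi c
        = Subtype.val ⁻¹' {x | x ∈ K \ O ∧ ∃ a ∈ Amap x, a ∈ (univ : Set A) ∧ c < w (x, a)} := by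
      ext s
      simp only [mem_preimage, mem_Ioi, mem_setOf_eq]
      constructor
      · intro h
        obtain ⟨a, ha, hc⟩ := (hvgt s.1 s.2 c).mp h
        exact ⟨s.2, a, ha, trivial, hc⟩
      · rintro ⟨-, a, ha, -, hc⟩
        exact (hvgt s.1 s.2 c).mpr ⟨a, ha, hc⟩
    rw [hpre]
    exact measurable_subtype_coe (hE univ isOpen_univ c)
  -- measurability of dpOp
  have hind : (K \ O).indicator v
      = Function.extend (Subtype.val : {x : X // x ∈ K \ O} → X) (fun s => v s.1) (fun _ => 0) := by
    funext x
    by_cases hx : x ∈ K \ O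
    · rw [Set.indicator_of_mem hx]
      have hxe : x = Subtype.val (⟨x, hx⟩ : {x : X // x ∈ K \ O}) := rfl
      rw [hxe, Subtype.val_injective.extend_apply]
    · rw [Set.indicator_of_notMem hx, Function.extend_apply']
      rintro ⟨s, rfl⟩
      exact hx s.2
  have hmv : Measurable ((K \ O).indicator v) := by
    rw [hind]
    exact (MeasurableEmbedding.subtype_coe (hmK.diff hmO)).measurable_extend hvS measurable_const
  have hdpeq : dpOp O K Amap Q u = fun x => O.indicator (1 : X → ℝ) x + (K \ O).indicator v x := rfl
  have hdp : Measurable (dpOp O K Amap Q u) := by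
    rw [hdpeq]
    exact (measurable_one.indicator hmO).add hmv
  -- pointwise values
  have hdpO : ∀ x ∈ O, dpOp O K Amap Q u x = 1 := by
    intro x hx
    have hx' : x ∉ K \ O := fun h => h.2 hx
    rw [hdpeq]
    simp [Set.indicator_of_mem hx, Set.indicator_of_notMem hx']
  have hdpKO : ∀ x ∈ K \ O, dpOp O K Amap Q u x = v x := by
    intro x hx
    rw [hdpeq]
    simp [Set.indicator_of_notMem hx.2, Set.indicator_of_mem hx]
  have hdpout : ∀ x ∉ K, dpOp O K Amap Q u x = 0 := by
    intro x hx
    have h1 : x ∉ O := fun h => hx (hOK.subset h)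
    have h2 : x ∉ K \ O := fun h => hx h.1
    rw [hdpeq]
    simp [Set.indicator_of_notMem h1, Set.indicator_of_notMem h2]
  refine ⟨hdp, ?_, ?_, hdpout, ?_, ?_⟩
  · intro x
    by_cases hO : x ∈ O
    · rw [hdpO x hO]; norm_num
    by_cases hK : x ∈ K
    · rw [hdpKO x ⟨hK, hO⟩]; exact hv0 x ⟨hK, hO⟩
    · rw [hdpout x hK]
  · intro x
    by_cases hO : x ∈ O
    · rw [hdpO x hO]
    by_cases hK : x ∈ K
    · rw [hdpKO x ⟨hK, hO⟩]; exact hv1 x ⟨hK, hO⟩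
    · rw [hdpout x hK]; norm_num
  · intro x hx
    obtain ⟨a, ha, he⟩ := hvattain x hx
    exact ⟨a, ha, he⟩
  -- measurable selector
  · letI := TopologicalSpace.upgradeIsCompletelyMetrizable A
    set MM : {x : X // x ∈ K \ O} → Set A :=
      fun s => {a | a ∈ Amap s.1 ∧ w (s.1, a) = v s.1} with hMMdef
    have hMMne : ∀ s, (MM s).Nonempty := by
      intro s
      obtain ⟨a, ha, he⟩ := hvattain s.1 s.2
      exact ⟨a, ha, he⟩
    have hlim : ∀ x, x ∈ K \ O → ∀ (p : ℕ → A) (a : A), (∀ n, p n ∈ Amap x) →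
        Tendsto p atTop (𝓝 a) →
        a ∈ Amap x ∧ Tendsto (fun n => w (x, p n)) atTop (𝓝 (w (x, a))) := by
      intro x hx p a hp hpa
      have haA : a ∈ Amap x := (hAcp x hx).isClosed.mem_of_tendsto hpa (Eventually.of_forall hp)
      have h1 : Tendsto p atTop (𝓝[Amap x] a) :=
        tendsto_nhdsWithin_iff.mpr ⟨hpa, Eventually.of_forall hp⟩
      exact ⟨haA, ((hslice x hx a haA).tendsto).comp h1⟩
    have hMMcl : ∀ s, IsClosed (MM s) := by
      intro s
      refine IsSeqClosed.isClosed ?_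
      intro p a hp hpa
      obtain ⟨haA, hwt⟩ := hlim s.1 s.2 p a (fun n => (hp n).1) hpa
      have heqf : (fun n => w (s.1, p n)) = fun _ => v s.1 := funext fun n => (hp n).2
      have hconst : Tendsto (fun n => w (s.1, p n)) atTop (𝓝 (v s.1)) := by
        rw [heqf]; exact tendsto_const_nhds
      exact ⟨haA, tendsto_nhds_unique hwt hconst⟩
    have hMMmeas : ∀ C : Set A, IsClosed C →
        MeasurableSet {s : {x : X // x ∈ K \ O} | (MM s ∩ C).Nonempty} := by
      intro C hC
      rcases C.eq_empty_or_nonempty with rfl | hCne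
      · simp
      have key : {s : {x : X // x ∈ K \ O} | (MM s ∩ C).Nonempty}
          = ⋂ k : ℕ, {s | ∃ a ∈ Amap s.1,
              a ∈ Metric.thickening (1/(k+1) : ℝ) C ∧ v s.1 - 1/(k+1) < w (s.1, a)} := by
        ext s
        simp only [mem_setOf_eq, mem_iInter]
        constructor
        · rintro ⟨a, ⟨haA, haw⟩, haC⟩ k
          have hk : (0:ℝ) < 1/(k+1) := by positivity
          refine ⟨a, haA, Metric.self_subset_thickening hk C haC, ?_⟩
          rw [haw]; linarith
        · intro h
          choose p hpA hpT hpw using h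
          obtain ⟨a, haA, φ, hφ, hpa⟩ := (hAcp s.1 s.2).tendsto_subseq hpA
          obtain ⟨-, hwt⟩ := hlim s.1 s.2 (p ∘ φ) a (fun n => hpA _) hpa
          have hδt : Tendsto (fun k : ℕ => (1/(k+1) : ℝ)) atTop (𝓝 0) := by
            simpa using tendsto_one_div_add_atTop_nhds_zero_nat (𝕜 := ℝ)
          have hδφ : ∀ k : ℕ, (1/(φ k+1) : ℝ) ≤ 1/(k+1) := by
            intro k
            have hk2 : k ≤ φ k := hφ.le_apply
            have h1 : ((k:ℝ)+1) ≤ (φ k:ℝ)+1 := by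
              have h3 := (Nat.cast_le (α := ℝ)).mpr hk2
              linarith
            exact one_div_le_one_div_of_le (by positivity) h1
          have hge : v s.1 ≤ w (s.1, a) := by
            have hlow : Tendsto (fun k : ℕ => v s.1 - 1/(k+1)) atTop (𝓝 (v s.1)) := by
              simpa using tendsto_const_nhds.sub hδt
            refine le_of_tendsto_of_tendsto' hlow hwt fun k => ?_
            have := hpw (φ k)
            have h2 : v s.1 - 1/(k+1) ≤ v s.1 - 1/(φ k+1) := by linarith [hδφ k]
            exact h2.trans this.le
          have hle : w (s.1, a) ≤ v s.1 := le_csSup (hbdd s.1 s.2) ⟨a, haA, rfl⟩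
          have haC : a ∈ C := by
            have h1 : Tendsto (fun k => Metric.infDist (p (φ k)) C) atTop
                (𝓝 (Metric.infDist a C)) :=
              ((Metric.continuous_infDist_pt C).tendsto a).comp hpa
            have h2 : Metric.infDist a C ≤ 0 := by
              refine le_of_tendsto_of_tendsto' h1 hδt fun k => ?_
              have := (Metric.mem_thickening_iff_infDist_lt hCne).mp (hpT (φ k))
              exact this.le.trans (hδφ k)
            have h3 : Metric.infDist a C = 0 := le_antisymm h2 Metric.infDist_nonneg
            exact (hC.mem_iff_infDist_zero hCne).mpr h3
          exact ⟨a, ⟨haA, le_antisymm hle hge⟩, haC⟩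
      rw [key]
      refine MeasurableSet.iInter fun k => ?_
      have hq : {s : {x : X // x ∈ K \ O} | ∃ a ∈ Amap s.1,
            a ∈ Metric.thickening (1/(k+1) : ℝ) C ∧ v s.1 - 1/(k+1) < w (s.1, a)}
          = ⋃ q : ℚ, ({s : {x : X // x ∈ K \ O} | v s.1 - 1/(k+1) < (q:ℝ)} ∩
              Subtype.val ⁻¹' {x | x ∈ K \ O ∧ ∃ a ∈ Amap x,
                a ∈ Metric.thickening (1/(k+1) : ℝ) C ∧ (q:ℝ) < w (x, a)}) := by
        ext s
        simp only [mem_setOf_eq, mem_iUnion, mem_inter_iff, mem_preimage]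
        constructor
        · rintro ⟨a, haA, haT, haw⟩
          obtain ⟨q, hq1, hq2⟩ := exists_rat_btwn haw
          exact ⟨q, hq1, s.2, a, haA, haT, hq2⟩
        · rintro ⟨q, hq1, -, a, haA, haT, hq2⟩
          exact ⟨a, haA, haT, hq1.trans hq2⟩
      rw [hq]
      refine MeasurableSet.iUnion fun q => ?_
      refine MeasurableSet.inter ?_
        (measurable_subtype_coe (hE _ Metric.isOpen_thickening _))
      exact measurableSet_lt (hvS.sub measurable_const) measurable_const
    obtain ⟨f, hfm, hfM⟩ := krn_selection MM hMMne hMMcl hMMmeas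
    refine ⟨f, hfm, fun x => (hfM x).1, fun x => ?_⟩
    exact (hdpKO x.1 x.2).trans ((hfM x).2).symm
end

section
/- Suppose τ ∧ τ' < ∞ holds P_x-almost surely for every x ∈ X. If u: X→[0,1] is Borel measurable with u = 0 on X∖K and u(x) ≤ 1_O(x) + 1_{K∖O}(x) · ∫_K u(y) κ(x, dy) for every x ∈ X, then u(x) ≤ h(x) for every x ∈ X. -/
open MeasureTheory ProbabilityTheory Set
open scoped ENNReal

/-- First hitting time of the set `S` by the sequence `ω`, valued in `ℕ∞` (`⊤` if never hit). -/
noncomputable def hitTime {X : Type*} (S : Set X) (ω : ℕ → X) : ℕ∞ :=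
  sInf ((fun t : ℕ => (t : ℕ∞)) '' {t : ℕ | ω t ∈ S})

/-- `P x` is the law on `X^ℕ` of the canonical Markov chain started at `x` with one-step
transition kernel `κ` (the Ionescu–Tulcea measure): each `P x` is a probability measure giving
full measure to paths starting at `x`, and conditionally on the first `n + 1` coordinates the
`(n+1)`-st coordinate has law `κ (ω n)`. -/
def IsMarkovChainLaw {X : Type*} [MeasurableSpace X] (κ : X → Measure X)
    (P : X → Measure (ℕ → X)) : Prop :=
  (∀ x, IsProbabilityMeasure (P x)) ∧
  (∀ x, P x {ω | ω 0 = x} = 1) ∧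
  (∀ x (n : ℕ) (E : Set (ℕ → X)),
    MeasurableSet[MeasurableSpace.comap (fun (ω : ℕ → X) (i : Fin (n + 1)) => ω (i : ℕ))
      inferInstance] E →
    ∀ f : X → ℝ≥0∞, Measurable f →
      ∫⁻ ω in E, f (ω (n + 1)) ∂(P x) = ∫⁻ ω in E, ∫⁻ y, f y ∂(κ (ω n)) ∂(P x))

lemma hitTime_le' {X : Type*} {S : Set X} {ω : ℕ → X} {t : ℕ} (h : ω t ∈ S) :
    hitTime S ω ≤ t := sInf_le ⟨t, h, rfl⟩

lemma le_hitTime' {X : Type*} {S : Set X} {ω : ℕ → X} {t : ℕ}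
    (h : ∀ s < t, ω s ∉ S) : (t : ℕ∞) ≤ hitTime S ω := by
  refine le_sInf ?_
  rintro b ⟨s, hm, rfl⟩
  have hst : ¬ s < t := fun hs => h s hs hm
  show (t : ℕ∞) ≤ (s : ℕ∞)
  exact_mod_cast Nat.le_of_not_lt hst

lemma lt_hitTime_iff' {X : Type*} {S : Set X} {ω : ℕ → X} {t : ℕ} :
    (t : ℕ∞) < hitTime S ω ↔ ∀ s ≤ t, ω s ∉ S := by
  constructor
  · intro h s hs hmem
    have h1 : hitTime S ω ≤ s := hitTime_le' hmem
    have h2 : (s : ℕ∞) ≤ t := by exact_mod_cast hs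
    exact absurd (lt_of_lt_of_le (lt_of_lt_of_le h h1) h2) (lt_irrefl _)
  · intro h
    have h1 : ((t + 1 : ℕ) : ℕ∞) ≤ hitTime S ω :=
      le_hitTime' (fun s hs => h s (Nat.lt_succ_iff.mp hs))
    refine lt_of_lt_of_le ?_ h1
    exact_mod_cast Nat.lt_succ_self t

lemma hitTime_lt_top_iff' {X : Type*} {S : Set X} {ω : ℕ → X} :
    hitTime S ω < ⊤ ↔ ∃ t, ω t ∈ S := by
  constructor
  · intro h
    by_contra hc
    push_neg at hc
    have he : {t : ℕ | ω t ∈ S} = ∅ := eq_empty_iff_forall_notMem.mpr hc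
    rw [hitTime, he] at h
    simp at h
  · rintro ⟨t, ht⟩
    exact lt_of_le_of_lt (hitTime_le' ht) (WithTop.coe_lt_top t)

theorem stmt3 {X : Type*} [MeasurableSpace X] [StandardBorelSpace X]
    (κ : Kernel X X) [IsMarkovKernel κ]
    (O K : Set X) (hmO : MeasurableSet O) (hmK : MeasurableSet K) (hOK : O ⊂ K)
    (P : X → Measure (ℕ → X)) (hP : IsMarkovChainLaw (fun x => κ x) P)
    (hfin : ∀ x, P x {ω | min (hitTime O ω) (hitTime Kᶜ ω) < ⊤} = 1)
    (u : X → ℝ≥0∞) (humeas : Measurable u) (hu1 : ∀ x, u x ≤ 1)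
    (huK : ∀ x ∉ K, u x = 0)
    (husub : ∀ x, u x ≤ O.indicator (1 : X → ℝ≥0∞) x +
      (K \ O).indicator (fun x' => ∫⁻ y in K, u y ∂(κ x')) x) :
    ∀ x, u x ≤ P x {ω | hitTime O ω < hitTime Kᶜ ω ∧ hitTime O ω < ⊤} := by
  classical
  intro x
  haveI : IsProbabilityMeasure (P x) := hP.1 x
  set A : ℕ → Set (ℕ → X) :=
    fun n => {ω | ∃ t ≤ n, ω t ∈ O ∧ ∀ s < t, ω s ∈ K \ O} with hA
  set G : ℕ → Set (ℕ → X) := fun n => {ω | ∀ s ≤ n, ω s ∈ K \ O} with hG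
  have hmKO : MeasurableSet (K \ O) := hmK.diff hmO
  -- measurability of A n
  have hmA : ∀ n, MeasurableSet (A n) := by
    intro n
    have hrepr : A n = ⋃ t, ⋃ (_ : t ≤ n),
        ((fun ω : ℕ → X => ω t) ⁻¹' O ∩ ⋂ s, ⋂ (_ : s < t),
          (fun ω : ℕ → X => ω s) ⁻¹' (K \ O)) := by
      ext ω
      simp only [hA, mem_setOf_eq, mem_iUnion, mem_inter_iff, mem_iInter, mem_preimage]
      tauto
    rw [hrepr]
    refine MeasurableSet.iUnion fun t => MeasurableSet.iUnion fun _ => ?_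
    exact ((measurable_pi_apply t) hmO).inter
      (MeasurableSet.iInter fun s => MeasurableSet.iInter fun _ =>
        (measurable_pi_apply s) hmKO)
  -- measurability of G n
  have hmG : ∀ n, MeasurableSet (G n) := by
    intro n
    have hrepr : G n = ⋂ s, ⋂ (_ : s ≤ n), (fun ω : ℕ → X => ω s) ⁻¹' (K \ O) := by
      ext ω
      simp only [hG, mem_setOf_eq, mem_iInter, mem_preimage]
    rw [hrepr]
    exact MeasurableSet.iInter fun s => MeasurableSet.iInter fun _ =>
      (measurable_pi_apply s) hmKO
  -- G n is measurable w.r.t. the first n+1 coordinates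
  have hGcomap : ∀ n, MeasurableSet[MeasurableSpace.comap
      (fun (ω : ℕ → X) (i : Fin (n + 1)) => ω (i : ℕ)) inferInstance] (G n) := by
    intro n
    refine ⟨{f : Fin (n + 1) → X | ∀ i, f i ∈ K \ O}, ?_, ?_⟩
    · have : {f : Fin (n + 1) → X | ∀ i, f i ∈ K \ O}
          = ⋂ i, (fun f : Fin (n + 1) → X => f i) ⁻¹' (K \ O) := by
        ext f; simp [mem_iInter]
      rw [this]
      exact MeasurableSet.iInter fun i => (measurable_pi_apply i) hmKO
    · ext ω
      constructor
      · intro h s hs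
        exact h ⟨s, Nat.lt_succ_of_le hs⟩
      · intro h i
        exact h i (Nat.lt_succ_iff.mp i.2)
  have h0 : P x {ω | ω 0 = x} = 1 := hP.2.1 x
  have hm0 : MeasurableSet {ω : ℕ → X | ω 0 = x} := by
    have : {ω : ℕ → X | ω 0 = x} = (fun ω : ℕ → X => ω 0) ⁻¹' {x} := rfl
    rw [this]
    exact (measurable_pi_apply 0) (measurableSet_singleton x)
  -- pointwise inequality : K.indicator u ≤ O.indicator 1 + (K\O).indicator u
  have hptwise : ∀ z, K.indicator u z ≤
      O.indicator (1 : X → ℝ≥0∞) z + (K \ O).indicator u z := by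
    intro z
    by_cases hzK : z ∈ K
    · by_cases hzO : z ∈ O
      · rw [indicator_of_mem hzK, indicator_of_mem hzO,
          indicator_of_notMem (fun h : z ∈ K \ O => h.2 hzO), add_zero]
        simpa using hu1 z
      · have hm : z ∈ K \ O := ⟨hzK, hzO⟩
        rw [indicator_of_mem hzK, indicator_of_notMem hzO,
          indicator_of_mem hm, zero_add]
    · rw [indicator_of_notMem hzK,
        indicator_of_notMem (fun h : z ∈ K \ O => hzK h.1)]
      exact zero_le
  -- the key induction
  have key : ∀ n, u x ≤ P x (A n) + ∫⁻ ω in G n, u (ω n) ∂(P x) := by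
    intro n
    induction n with
    | zero =>
      by_cases hxK : x ∈ K
      · by_cases hxO : x ∈ O
        · have hsub : {ω : ℕ → X | ω 0 = x} ⊆ A 0 := by
            intro ω hω
            rw [Set.mem_setOf_eq] at hω
            exact ⟨0, le_refl 0, by rw [hω]; exact hxO,
              fun s hs => absurd hs (Nat.not_lt_zero s)⟩
          calc u x ≤ 1 := hu1 x
            _ = P x {ω | ω 0 = x} := h0.symm
            _ ≤ P x (A 0) := measure_mono hsub
            _ ≤ P x (A 0) + _ := le_self_add
        · have hsub : {ω : ℕ → X | ω 0 = x} ⊆ G 0 := by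
            intro ω hω s hs
            rw [Set.mem_setOf_eq] at hω
            have hs0 : s = 0 := Nat.le_zero.mp hs
            rw [hs0, hω]; exact ⟨hxK, hxO⟩
          have h1 : ∫⁻ ω in {ω : ℕ → X | ω 0 = x}, u (ω 0) ∂(P x) = u x := by
            have hc : ∫⁻ ω in {ω : ℕ → X | ω 0 = x}, u (ω 0) ∂(P x)
                = ∫⁻ _ in {ω : ℕ → X | ω 0 = x}, u x ∂(P x) := by
              refine setLIntegral_congr_fun hm0 ?_
              intro ω hω
              have he : ω 0 = x := hω
              simp only [he]
            rw [hc, setLIntegral_const, h0, mul_one]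
          have h2 : u x ≤ ∫⁻ ω in G 0, u (ω 0) ∂(P x) := by
            rw [← h1]
            exact lintegral_mono_set hsub
          exact h2.trans le_add_self
      · simp [huK x hxK]
    | succ n ih =>
      set w : X → ℝ≥0∞ := fun a => ∫⁻ y in K, u y ∂(κ a) with hw
      have hwmeas : Measurable w := Measurable.setLIntegral_kernel humeas hmK
      -- step 1: on G n the function u is dominated by the kernel average
      have step1 : ∫⁻ ω in G n, u (ω n) ∂(P x) ≤ ∫⁻ ω in G n, w (ω n) ∂(P x) := by
        refine setLIntegral_mono (hwmeas.comp (measurable_pi_apply n)) ?_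
        intro ω hω
        have hmem : ω n ∈ K \ O := hω n (le_refl n)
        have := husub (ω n)
        rwa [indicator_of_notMem hmem.2, indicator_of_mem hmem, zero_add] at this
      -- step 2: Markov property
      have step2 : ∫⁻ ω in G n, w (ω n) ∂(P x)
          = ∫⁻ ω in G n, K.indicator u (ω (n + 1)) ∂(P x) := by
        have hmark := hP.2.2 x n (G n) (hGcomap n) (K.indicator u) (humeas.indicator hmK)
        rw [hmark]
        refine lintegral_congr fun ω => ?_
        simp only [hw]
        rw [lintegral_indicator hmK]
      -- step 3: split the indicator
      have e1 : ∀ ω : ℕ → X, O.indicator (1 : X → ℝ≥0∞) (ω (n + 1))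
          = ((fun ω : ℕ → X => ω (n + 1)) ⁻¹' O).indicator (1 : (ℕ → X) → ℝ≥0∞) ω := by
        intro ω
        by_cases h : ω (n + 1) ∈ O
        · rw [indicator_of_mem h,
            indicator_of_mem (show ω ∈ (fun ω : ℕ → X => ω (n + 1)) ⁻¹' O from h)]
          rfl
        · rw [indicator_of_notMem h,
            indicator_of_notMem (show ω ∉ (fun ω : ℕ → X => ω (n + 1)) ⁻¹' O from h)]
      have e2 : ∀ ω : ℕ → X, (K \ O).indicator u (ω (n + 1))
          = ((fun ω : ℕ → X => ω (n + 1)) ⁻¹' (K \ O)).indicator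
              (fun ω : ℕ → X => u (ω (n + 1))) ω := by
        intro ω
        by_cases h : ω (n + 1) ∈ K \ O
        · rw [indicator_of_mem h,
            indicator_of_mem (show ω ∈ (fun ω : ℕ → X => ω (n + 1)) ⁻¹' (K \ O) from h)]
        · rw [indicator_of_notMem h,
            indicator_of_notMem (show ω ∉ (fun ω : ℕ → X => ω (n + 1)) ⁻¹' (K \ O) from h)]
      have hGsucc : G n ∩ ((fun ω : ℕ → X => ω (n + 1)) ⁻¹' (K \ O)) = G (n + 1) := by
        ext ω
        constructor
        · rintro ⟨h1, h2⟩ s hs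
          rcases Nat.lt_succ_iff_lt_or_eq.mp (Nat.lt_succ_of_le hs) with h | h
          · exact h1 s (Nat.lt_succ_iff.mp h)
          · rw [h]; exact h2
        · intro h
          exact ⟨fun s hs => h s (hs.trans (Nat.le_succ n)), h (n + 1) (le_refl _)⟩
      have step3 : ∫⁻ ω in G n, K.indicator u (ω (n + 1)) ∂(P x)
          ≤ P x (G n ∩ ((fun ω : ℕ → X => ω (n + 1)) ⁻¹' O))
            + ∫⁻ ω in G (n + 1), u (ω (n + 1)) ∂(P x) := by
        have hle : ∫⁻ ω in G n, K.indicator u (ω (n + 1)) ∂(P x)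
            ≤ ∫⁻ ω in G n, (O.indicator (1 : X → ℝ≥0∞) (ω (n + 1))
              + (K \ O).indicator u (ω (n + 1))) ∂(P x) :=
          lintegral_mono fun ω => hptwise (ω (n + 1))
        refine hle.trans ?_
        have hf1 : Measurable fun ω : ℕ → X => O.indicator (1 : X → ℝ≥0∞) (ω (n + 1)) :=
          (measurable_one.indicator hmO).comp (measurable_pi_apply (n + 1))
        rw [lintegral_add_left hf1]
        have hterm1 : ∫⁻ ω in G n, O.indicator (1 : X → ℝ≥0∞) (ω (n + 1)) ∂(P x)
            = P x (G n ∩ ((fun ω : ℕ → X => ω (n + 1)) ⁻¹' O)) := by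
          simp_rw [e1]
          rw [lintegral_indicator ((measurable_pi_apply (n+1)) hmO)]
          rw [Measure.restrict_restrict ((measurable_pi_apply (n+1)) hmO)]
          simp only [Pi.one_apply]
          rw [setLIntegral_one, Set.inter_comm]
        have hterm2 : ∫⁻ ω in G n, (K \ O).indicator u (ω (n + 1)) ∂(P x)
            = ∫⁻ ω in G (n + 1), u (ω (n + 1)) ∂(P x) := by
          simp_rw [e2]
          rw [lintegral_indicator ((measurable_pi_apply (n+1)) hmKO)]
          rw [Measure.restrict_restrict ((measurable_pi_apply (n+1)) hmKO)]
          rw [Set.inter_comm, hGsucc]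
        rw [hterm1, hterm2]
      -- step 4: the new O-hitting piece fits inside A (n+1)
      have step4 : P x (A n) + P x (G n ∩ ((fun ω : ℕ → X => ω (n + 1)) ⁻¹' O))
          ≤ P x (A (n + 1)) := by
        have hdisj : Disjoint (A n) (G n ∩ ((fun ω : ℕ → X => ω (n + 1)) ⁻¹' O)) := by
          rw [Set.disjoint_left]
          rintro ω ⟨t, htn, htO, _⟩ ⟨hG1, _⟩
          exact (hG1 t htn).2 htO
        have hsub : A n ∪ (G n ∩ ((fun ω : ℕ → X => ω (n + 1)) ⁻¹' O)) ⊆ A (n + 1) := by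
          rintro ω (⟨t, htn, htO, hpre⟩ | ⟨hG1, hO1⟩)
          · exact ⟨t, htn.trans (Nat.le_succ n), htO, hpre⟩
          · exact ⟨n + 1, le_refl _, hO1, fun s hs => hG1 s (Nat.lt_succ_iff.mp hs)⟩
        calc P x (A n) + P x (G n ∩ _)
            = P x (A n ∪ (G n ∩ ((fun ω : ℕ → X => ω (n + 1)) ⁻¹' O))) := by
              rw [measure_union hdisj ((hmG n).inter ((measurable_pi_apply (n+1)) hmO))]
          _ ≤ P x (A (n + 1)) := measure_mono hsub
      calc u x ≤ P x (A n) + ∫⁻ ω in G n, u (ω n) ∂(P x) := ih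
        _ ≤ P x (A n) + (P x (G n ∩ ((fun ω : ℕ → X => ω (n + 1)) ⁻¹' O))
            + ∫⁻ ω in G (n + 1), u (ω (n + 1)) ∂(P x)) := by
            exact add_le_add_right ((step1.trans step2.le).trans step3) _
        _ = (P x (A n) + P x (G n ∩ ((fun ω : ℕ → X => ω (n + 1)) ⁻¹' O)))
            + ∫⁻ ω in G (n + 1), u (ω (n + 1)) ∂(P x) := by ring
        _ ≤ P x (A (n + 1)) + ∫⁻ ω in G (n + 1), u (ω (n + 1)) ∂(P x) :=
            add_le_add_left step4 _
  have key2 : ∀ n, u x ≤ P x (A n) + P x (G n) := by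
    intro n
    refine (key n).trans (add_le_add_right ?_ _)
    calc ∫⁻ ω in G n, u (ω n) ∂(P x) ≤ ∫⁻ _ in G n, 1 ∂(P x) :=
        lintegral_mono fun ω => hu1 _
      _ = P x (G n) := setLIntegral_one _
  -- limits
  have hAmono : Monotone A := by
    intro m n hmn ω ⟨t, ht, h⟩
    exact ⟨t, ht.trans hmn, h⟩
  have hGanti : Antitone G := by
    intro m n hmn ω h s hs
    exact h s (hs.trans hmn)
  have hAU : Filter.Tendsto (fun n => P x (A n)) Filter.atTop (nhds (P x (⋃ n, A n))) :=
    tendsto_measure_iUnion_atTop hAmono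
  have hGI : Filter.Tendsto (fun n => P x (G n)) Filter.atTop (nhds (P x (⋂ n, G n))) :=
    tendsto_measure_iInter_atTop (fun n => (hmG n).nullMeasurableSet) hGanti
      ⟨0, measure_ne_top _ _⟩
  -- the intersection of the G n is null
  have hGzero : P x (⋂ n, G n) = 0 := by
    set S : Set (ℕ → X) := {ω | min (hitTime O ω) (hitTime Kᶜ ω) < ⊤} with hS
    have hSrepr : S = ⋃ t, ((fun ω : ℕ → X => ω t) ⁻¹' O ∪ (fun ω : ℕ → X => ω t) ⁻¹' Kᶜ) := by
      ext ω
      simp only [hS, mem_setOf_eq, min_lt_iff, mem_iUnion, mem_union, mem_preimage,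
        hitTime_lt_top_iff']
      constructor
      · rintro (⟨t, ht⟩ | ⟨t, ht⟩)
        exacts [⟨t, Or.inl ht⟩, ⟨t, Or.inr ht⟩]
      · rintro ⟨t, ht | ht⟩
        exacts [Or.inl ⟨t, ht⟩, Or.inr ⟨t, ht⟩]
    have hSmeas : MeasurableSet S := by
      rw [hSrepr]
      exact MeasurableSet.iUnion fun t =>
        ((measurable_pi_apply t) hmO).union ((measurable_pi_apply t) hmK.compl)
    have hsub : (⋂ n, G n) ⊆ Sᶜ := by
      intro ω hω
      rw [hSrepr]
      simp only [mem_compl_iff, mem_iUnion, mem_union, mem_preimage, not_exists, not_or]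
      intro t
      have := (mem_iInter.mp hω t) t (le_refl t)
      exact ⟨fun hO => this.2 hO, fun hKc => hKc this.1⟩
    have : P x Sᶜ = 0 := by
      rw [measure_compl hSmeas (measure_ne_top _ _), hfin x]
      simp
    exact measure_mono_null hsub this
  -- identification of the union of the A n
  have hAeq : (⋃ n, A n) = {ω | hitTime O ω < hitTime Kᶜ ω ∧ hitTime O ω < ⊤} := by
    ext ω
    simp only [mem_iUnion, mem_setOf_eq]
    constructor
    · rintro ⟨n, t, htn, htO, hpre⟩
      have h1 : hitTime O ω ≤ t := hitTime_le' htO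
      have h2 : (t : ℕ∞) < hitTime Kᶜ ω := by
        rw [lt_hitTime_iff']
        intro s hs hsKc
        rcases Nat.lt_or_ge s t with h | h
        · exact hsKc (hpre s h).1
        · have : s = t := le_antisymm hs h
          rw [this] at hsKc
          exact hsKc (hOK.subset htO)
      exact ⟨lt_of_le_of_lt h1 h2, lt_of_le_of_lt h1 (WithTop.coe_lt_top t)⟩
    · rintro ⟨hlt, htop⟩
      obtain ⟨t, ht⟩ := hitTime_lt_top_iff'.mp htop
      have hex : ∃ t, ω t ∈ O := ⟨t, ht⟩
      set t0 := Nat.find hex with ht0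
      have ht0O : ω t0 ∈ O := Nat.find_spec hex
      have heq : hitTime O ω = t0 :=
        le_antisymm (hitTime_le' ht0O) (le_hitTime' fun s hs => Nat.find_min hex hs)
      have hK : ∀ s ≤ t0, ω s ∈ K := by
        have : (t0 : ℕ∞) < hitTime Kᶜ ω := heq ▸ hlt
        intro s hs
        by_contra hc
        exact (lt_hitTime_iff'.mp this) s hs hc
      refine ⟨t0, t0, le_refl _, ht0O, fun s hs => ⟨hK s hs.le, Nat.find_min hex hs⟩⟩
  -- conclude
  have htends : Filter.Tendsto (fun n => P x (A n) + P x (G n)) Filter.atTop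
      (nhds (P x (⋃ n, A n) + P x (⋂ n, G n))) :=
    Filter.Tendsto.add hAU hGI
  have hfinal : u x ≤ P x (⋃ n, A n) + P x (⋂ n, G n) :=
    ge_of_tendsto' htends key2
  rw [hGzero, add_zero, hAeq] at hfinal
  exact hfinal
end

section
/- Suppose τ ∧ τ' < ∞ holds P_x-almost surely for every x ∈ X. If ψ: X→[0,1] is Borel measurable with ψ = 1 on O, ψ = 0 on X∖K, and ψ(x) = ∫_K ψ(y) κ(x, dy) for every x ∈ K∖O, then ψ(x) = h(x) for every x ∈ X. -/
open MeasureTheory ProbabilityTheory Set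
open scoped ENNReal

lemma hitTime_lt_iff {X : Type*} {S : Set X} {ω : ℕ → X} {c : ℕ∞} :
    hitTime S ω < c ↔ ∃ t : ℕ, (t : ℕ∞) < c ∧ ω t ∈ S := by
  unfold hitTime
  rw [sInf_lt_iff]
  constructor
  · rintro ⟨a, ⟨t, ht, rfl⟩, hlt⟩; exact ⟨t, hlt, ht⟩
  · rintro ⟨t, hlt, ht⟩; exact ⟨t, ⟨t, ht, rfl⟩, hlt⟩

lemma hitTime_le_of_mem {X : Type*} {S : Set X} {ω : ℕ → X} {t : ℕ} (h : ω t ∈ S) :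
    hitTime S ω ≤ (t : ℕ∞) :=
  sInf_le ⟨t, h, rfl⟩

/-- Paths staying in `K \ O` before time `n`. -/
def Bset {X : Type*} (K O : Set X) (n : ℕ) : Set (ℕ → X) := {ω | ∀ t < n, ω t ∈ K \ O}

/-- Paths staying in `K \ O` before time `t` and in `O` at time `t`. -/
def Dset {X : Type*} (K O : Set X) (t : ℕ) : Set (ℕ → X) :=
  {ω | (∀ s < t, ω s ∈ K \ O) ∧ ω t ∈ O}

lemma mem_target_iff {X : Type*} {K O : Set X} (hOK : O ⊆ K) (ω : ℕ → X) :
    (hitTime O ω < hitTime Kᶜ ω ∧ hitTime O ω < ⊤) ↔ ∃ t, ω ∈ Dset K O t := by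
  classical
  constructor
  · rintro ⟨h1, h2⟩
    have hne : ∃ t, ω t ∈ O := by
      obtain ⟨t, _, ht⟩ := hitTime_lt_iff.mp h2
      exact ⟨t, ht⟩
    refine ⟨Nat.find hne, fun s hs => ⟨?_, Nat.find_min hne hs⟩, Nat.find_spec hne⟩
    by_contra hK
    have hKle : hitTime Kᶜ ω ≤ (s : ℕ∞) := hitTime_le_of_mem hK
    have : hitTime O ω < (s : ℕ∞) := lt_of_lt_of_le h1 hKle
    obtain ⟨u, hu, huO⟩ := hitTime_lt_iff.mp this
    have hus : u < s := by exact_mod_cast hu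
    exact Nat.find_min hne (hus.trans hs) huO
  · rintro ⟨t, hst, htO⟩
    have hle : hitTime O ω ≤ (t : ℕ∞) := hitTime_le_of_mem htO
    have hgt : (t : ℕ∞) < hitTime Kᶜ ω := by
      by_contra h
      push_neg at h
      have : hitTime Kᶜ ω < ((t + 1 : ℕ) : ℕ∞) := by
        refine lt_of_le_of_lt h ?_
        exact_mod_cast Nat.lt_succ_self t
      obtain ⟨u, hu, huK⟩ := hitTime_lt_iff.mp this
      have hut : u < t + 1 := by exact_mod_cast hu
      rcases Nat.lt_succ_iff_lt_or_eq.mp hut with h' | rfl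
      · exact huK (hst u h').1
      · exact huK (hOK htO)
    exact ⟨lt_of_le_of_lt hle hgt, lt_of_le_of_lt hle (WithTop.coe_lt_top t)⟩

theorem stmt5 {X : Type*} [MeasurableSpace X] [StandardBorelSpace X]
    (κ : Kernel X X) [IsMarkovKernel κ]
    (O K : Set X) (hmO : MeasurableSet O) (hmK : MeasurableSet K) (hOK : O ⊂ K)
    (P : X → Measure (ℕ → X)) (hP : IsMarkovChainLaw (fun x => κ x) P)
    (hfin : ∀ x, P x {ω | min (hitTime O ω) (hitTime Kᶜ ω) < ⊤} = 1)
    (ψ : X → ℝ≥0∞) (hψmeas : Measurable ψ) (hψ1 : ∀ x, ψ x ≤ 1)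
    (hψO : ∀ x ∈ O, ψ x = 1) (hψK : ∀ x ∉ K, ψ x = 0)
    (hψharm : ∀ x ∈ K \ O, ψ x = ∫⁻ y in K, ψ y ∂(κ x)) :
    ∀ x, ψ x = P x {ω | hitTime O ω < hitTime Kᶜ ω ∧ hitTime O ω < ⊤} := by
  intro x
  haveI : IsProbabilityMeasure (P x) := hP.1 x
  have hmKO : MeasurableSet (K \ O) := hmK.diff hmO
  -- measurability of Bset and Dset
  have hBmeas : ∀ n, MeasurableSet (Bset K O n) := by
    intro n
    have : Bset K O n = ⋂ t, ⋂ _ : t < n, (fun ω : ℕ → X => ω t) ⁻¹' (K \ O) := by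
      ext ω; simp [Bset]
    rw [this]
    exact MeasurableSet.iInter fun t => MeasurableSet.iInter fun _ =>
      (measurable_pi_apply t) hmKO
  have hDmeas : ∀ t, MeasurableSet (Dset K O t) := by
    intro t
    have : Dset K O t = Bset K O t ∩ (fun ω : ℕ → X => ω t) ⁻¹' O := rfl
    rw [this]
    exact (hBmeas t).inter ((measurable_pi_apply t) hmO)
  -- ψ vanishes outside K, so the harmonicity integral is a full integral
  have hKint : ∀ z : X, ∫⁻ y in K, ψ y ∂(κ z) = ∫⁻ y, ψ y ∂(κ z) := by
    intro z
    rw [← lintegral_indicator hmK]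
    congr 1
    funext y
    by_cases hy : y ∈ K
    · simp [indicator, hy]
    · simp [indicator, hy, hψK y hy]
  -- key induction
  have key : ∀ n : ℕ, ψ x =
      (∑ t ∈ Finset.range n, P x (Dset K O t)) + ∫⁻ ω in Bset K O n, ψ (ω n) ∂(P x) := by
    intro n
    induction n with
    | zero =>
      have hB0 : Bset K O 0 = Set.univ := by ext ω; simp [Bset]
      have h0 : ∀ᵐ ω ∂(P x), ω 0 = x := by
        have hm : MeasurableSet {ω : ℕ → X | ω 0 = x} := by
          have he : {ω : ℕ → X | ω 0 = x} = (fun ω : ℕ → X => ω 0) ⁻¹' {x} := rfl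
          rw [he]; exact (measurable_pi_apply 0) (measurableSet_singleton x)
        rw [ae_iff]
        have hc : {ω : ℕ → X | ¬ ω 0 = x} = {ω : ℕ → X | ω 0 = x}ᶜ := rfl
        rw [hc, measure_compl hm (measure_ne_top _ _), hP.2.1 x, measure_univ]
        simp
      rw [hB0]
      simp only [Finset.range_zero, Finset.sum_empty, zero_add, Measure.restrict_univ]
      calc ψ x = ∫⁻ _, ψ x ∂(P x) := by simp
        _ = ∫⁻ ω, ψ (ω 0) ∂(P x) := lintegral_congr_ae (h0.mono fun ω hω => by
              dsimp only; rw [hω])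
    | succ n ih =>
      -- split Bset K O n
      have hB1 : Bset K O (n + 1) = Bset K O n ∩ {ω | ω n ∈ K \ O} := by
        ext ω
        constructor
        · intro h
          exact ⟨fun t ht => h t (ht.trans (Nat.lt_succ_self n)), h n (Nat.lt_succ_self n)⟩
        · rintro ⟨h1, h2⟩ t ht
          rcases Nat.lt_succ_iff_lt_or_eq.mp ht with h' | rfl
          · exact h1 t h'
          · exact h2
      have hCmeas : MeasurableSet (Bset K O n ∩ {ω : ℕ → X | ω n ∉ K}) := by
        have he : {ω : ℕ → X | ω n ∉ K} = (fun ω : ℕ → X => ω n) ⁻¹' Kᶜ := rfl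
        exact (hBmeas n).inter (he ▸ (measurable_pi_apply n) hmK.compl)
      have hsplit : Bset K O n =
          (Dset K O n ∪ Bset K O (n + 1)) ∪ (Bset K O n ∩ {ω | ω n ∉ K}) := by
        ext ω
        constructor
        · intro h
          by_cases hK : ω n ∈ K
          · by_cases hO : ω n ∈ O
            · exact Or.inl (Or.inl ⟨h, hO⟩)
            · exact Or.inl (Or.inr (hB1 ▸ ⟨h, hK, hO⟩))
          · exact Or.inr ⟨h, hK⟩
        · rintro ((⟨h, _⟩ | h) | ⟨h, _⟩)
          · exact h
          · exact fun t ht => h t (ht.trans (Nat.lt_succ_self n))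
          · exact h
      have hd1 : Disjoint (Dset K O n) (Bset K O (n + 1)) := by
        rw [Set.disjoint_left]
        rintro ω ⟨_, hO⟩ hω
        exact ((hB1 ▸ hω : ω ∈ _ ∩ _).2).2 hO
      have hd2 : Disjoint (Dset K O n ∪ Bset K O (n + 1))
          (Bset K O n ∩ {ω : ℕ → X | ω n ∉ K}) := by
        rw [Set.disjoint_left]
        rintro ω (⟨_, hO⟩ | hω) ⟨_, hK⟩
        · exact hK (hOK.subset hO)
        · exact hK ((hB1 ▸ hω : ω ∈ _ ∩ _).2).1
      -- compute each piece
      have e1 : ∫⁻ ω in Dset K O n, ψ (ω n) ∂(P x) = P x (Dset K O n) := by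
        rw [setLIntegral_congr_fun (hDmeas n)
          (fun ω hω => hψO _ hω.2)]
        exact setLIntegral_one _
      have e2 : ∫⁻ ω in Bset K O n ∩ {ω : ℕ → X | ω n ∉ K}, ψ (ω n) ∂(P x) = 0 := by
        rw [setLIntegral_congr_fun hCmeas (fun ω hω => hψK _ hω.2)]
        simp
      have hE : MeasurableSet[MeasurableSpace.comap
          (fun (ω : ℕ → X) (i : Fin (n + 1)) => ω (i : ℕ)) inferInstance]
          (Bset K O (n + 1)) := by
        refine ⟨{f : Fin (n + 1) → X | ∀ i, f i ∈ K \ O}, ?_, ?_⟩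
        · have : {f : Fin (n + 1) → X | ∀ i, f i ∈ K \ O} =
              ⋂ i, (fun f : Fin (n + 1) → X => f i) ⁻¹' (K \ O) := by ext f; simp
          rw [this]
          exact MeasurableSet.iInter fun i => (measurable_pi_apply i) hmKO
        · ext ω
          simp only [mem_preimage, mem_setOf_eq, Bset]
          constructor
          · intro h t ht; exact h ⟨t, ht⟩
          · intro h i; exact h i i.isLt
      have e3 : ∫⁻ ω in Bset K O (n + 1), ψ (ω n) ∂(P x)
          = ∫⁻ ω in Bset K O (n + 1), ψ (ω (n + 1)) ∂(P x) := by
        have step1 : ∫⁻ ω in Bset K O (n + 1), ψ (ω n) ∂(P x)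
            = ∫⁻ ω in Bset K O (n + 1), ∫⁻ y, ψ y ∂(κ (ω n)) ∂(P x) := by
          refine setLIntegral_congr_fun (hBmeas (n + 1)) (fun ω hω => ?_)
          rw [hψharm _ (hω n (Nat.lt_succ_self n)), hKint (ω n)]
        rw [step1]
        exact (hP.2.2 x n (Bset K O (n + 1)) hE ψ hψmeas).symm
      calc ψ x = (∑ t ∈ Finset.range n, P x (Dset K O t))
            + ∫⁻ ω in Bset K O n, ψ (ω n) ∂(P x) := ih
        _ = (∑ t ∈ Finset.range n, P x (Dset K O t))
            + ((P x (Dset K O n) + ∫⁻ ω in Bset K O (n + 1), ψ (ω (n + 1)) ∂(P x)) + 0) := by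
          rw [hsplit, lintegral_union hCmeas hd2, lintegral_union (hBmeas (n + 1)) hd1,
            e1, e2, e3]
        _ = (∑ t ∈ Finset.range (n + 1), P x (Dset K O t))
            + ∫⁻ ω in Bset K O (n + 1), ψ (ω (n + 1)) ∂(P x) := by
          rw [Finset.sum_range_succ]; ring
  -- the limits
  have hBanti : Antitone (Bset K O (X := X)) := by
    intro m n h ω hω t ht
    exact hω t (lt_of_lt_of_le ht h)
  have hiB : P x (⋂ n, Bset K O n) = 0 := by
    have hset : {ω : ℕ → X | min (hitTime O ω) (hitTime Kᶜ ω) < ⊤} = (⋂ n, Bset K O n)ᶜ := by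
      ext ω
      simp only [mem_compl_iff, mem_iInter, mem_setOf_eq, Bset]
      rw [min_lt_iff]
      constructor
      · rintro (h | h) hall
        · obtain ⟨t, _, htO⟩ := hitTime_lt_iff.mp h
          exact (hall (t + 1) t (Nat.lt_succ_self t)).2 htO
        · obtain ⟨t, _, htK⟩ := hitTime_lt_iff.mp h
          exact htK (hall (t + 1) t (Nat.lt_succ_self t)).1
      · intro h
        by_contra hc
        push_neg at hc
        refine h fun n t ht => ?_
        constructor
        · by_contra hK
          exact (lt_of_le_of_lt (hitTime_le_of_mem (X := X) (S := Kᶜ) (ω := ω) (t := t) hK)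
            (WithTop.coe_lt_top t)).not_ge hc.2
        · intro hO
          exact (lt_of_le_of_lt (hitTime_le_of_mem hO) (WithTop.coe_lt_top t)).not_ge hc.1
    have hmi : MeasurableSet (⋂ n, Bset K O n) := MeasurableSet.iInter hBmeas
    have h1 : P x ((⋂ n, Bset K O n)ᶜ) = 1 := by rw [← hset]; exact hfin x
    have := measure_compl hmi.compl (measure_ne_top (P x) _)
    rw [compl_compl, h1, measure_univ] at this
    simpa using this
  have hPBtend : Filter.Tendsto (fun n => P x (Bset K O n)) Filter.atTop (nhds 0) := by
    have hf : ∃ i, P x (Bset K O i) ≠ ∞ := ⟨0, measure_ne_top (P x) _⟩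
    have := tendsto_measure_iInter_atTop (μ := P x)
      (fun n => (hBmeas n).nullMeasurableSet) hBanti hf
    rw [hiB] at this
    exact this
  have hbound : ∀ n, ∫⁻ ω in Bset K O n, ψ (ω n) ∂(P x) ≤ P x (Bset K O n) := by
    intro n
    calc ∫⁻ ω in Bset K O n, ψ (ω n) ∂(P x) ≤ ∫⁻ _ in Bset K O n, 1 ∂(P x) :=
          lintegral_mono fun ω => hψ1 _
      _ = P x (Bset K O n) := setLIntegral_one _
  have h2 : Filter.Tendsto (fun n => ∫⁻ ω in Bset K O n, ψ (ω n) ∂(P x))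
      Filter.atTop (nhds 0) :=
    tendsto_of_tendsto_of_tendsto_of_le_of_le tendsto_const_nhds hPBtend
      (fun n => zero_le) hbound
  have hdisj : Pairwise (Function.onFun Disjoint (Dset K O (X := X))) := by
    intro s t hst
    rcases Nat.lt_or_ge s t with h | h
    · rw [Function.onFun, Set.disjoint_left]
      rintro ω ⟨_, hO⟩ ⟨hall, _⟩
      exact (hall s h).2 hO
    · have h' : t < s := lt_of_le_of_ne h (Ne.symm hst)
      rw [Function.onFun, Set.disjoint_left]
      rintro ω ⟨hall, _⟩ ⟨_, hO⟩
      exact (hall t h').2 hO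
  have h1 : Filter.Tendsto (fun n => ∑ t ∈ Finset.range n, P x (Dset K O t))
      Filter.atTop (nhds (P x (⋃ t, Dset K O t))) := by
    rw [measure_iUnion hdisj hDmeas]
    exact ENNReal.tendsto_nat_tsum _
  have hfinal : Filter.Tendsto
      (fun n => (∑ t ∈ Finset.range n, P x (Dset K O t))
        + ∫⁻ ω in Bset K O n, ψ (ω n) ∂(P x))
      Filter.atTop (nhds (P x (⋃ t, Dset K O t) + 0)) := h1.add h2
  have hconst : Filter.Tendsto (fun _ : ℕ => ψ x) Filter.atTop
      (nhds (P x (⋃ t, Dset K O t) + 0)) :=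
    hfinal.congr fun n => (key n).symm
  have heq := tendsto_nhds_unique hconst tendsto_const_nhds
  rw [add_zero] at heq
  have hsets : (⋃ t, Dset K O t)
      = {ω : ℕ → X | hitTime O ω < hitTime Kᶜ ω ∧ hitTime O ω < ⊤} := by
    ext ω
    simp only [mem_iUnion, mem_setOf_eq]
    exact (mem_target_iff hOK.subset ω).symm
  rw [← heq, hsets]
end

section
/- E[Σ_{t=0}^{τ̃∧σ} Y_t] = E[Σ_{t=0}^{σ} α^t Y_t], where on the left the (almost surely finite) sum runs over 0 ≤ t ≤ min(τ̃, σ) and on the right the sum runs over 0 ≤ t ≤ σ (an infinite series when σ = ∞, which converges since 0 ≤ Y_t ≤ 1 and 0 < α < 1). -/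
open MeasureTheory ProbabilityTheory Set Finset

theorem stmt17 {Ω : Type*} [m0 : MeasurableSpace Ω] (P : Measure Ω) [IsProbabilityMeasure P]
    (α : ℝ) (hα0 : 0 < α) (hα1 : α < 1)
    (τ : Ω → ℕ) (hτmeas : Measurable τ)
    (hτdist : ∀ n : ℕ, P {ω | τ ω = n} = ENNReal.ofReal ((1 - α) * α ^ n))
    (G : MeasurableSpace Ω) (hG : G ≤ m0)
    (hindep : Indep G (MeasurableSpace.comap τ inferInstance) P)
    (Y : ℕ → Ω → ℝ) (hYmeas : ∀ t, Measurable[G] (Y t))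
    (hY0 : ∀ t ω, 0 ≤ Y t ω) (hY1 : ∀ t ω, Y t ω ≤ 1)
    (σ : Ω → ℕ∞) (hσmeas : Measurable[G] σ) :
    ∫ ω, (∑ t ∈ Finset.range ((min ((τ ω : ℕ∞)) (σ ω)).toNat + 1), Y t ω) ∂P =
      ∫ ω, (∑' t : ℕ, if (t : ℕ∞) ≤ σ ω then α ^ t * Y t ω else 0) ∂P := by
  have hα0' : (0:ℝ) ≤ α := hα0.le
  have h1α : (0:ℝ) < 1 - α := by linarith
  set g : ℕ → Ω → ℝ := fun t ω => if (t:ℕ∞) ≤ σ ω then Y t ω else 0 with hg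
  set B : ℕ → Set Ω := fun t => {ω | t ≤ τ ω} with hBdef
  -- bounds on g
  have hg0 : ∀ t ω, 0 ≤ g t ω := by
    intro t ω; simp only [hg]; split <;> simp [hY0 t ω]
  have hg1 : ∀ t ω, g t ω ≤ 1 := by
    intro t ω; simp only [hg]; split <;> simp [hY1 t ω]
  -- measurability
  have hgG : ∀ t, Measurable[G] (g t) := by
    intro t
    exact Measurable.ite (hσmeas (show MeasurableSet (Set.Ici (t:ℕ∞)) by trivial)) (hYmeas t) measurable_const
  have hgm : ∀ t, Measurable[m0] (g t) := fun t => (hgG t).mono hG le_rfl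
  have hBmeas : ∀ t, MeasurableSet[m0] (B t) := by
    intro t
    have h : B t = τ ⁻¹' {n | t ≤ n} := rfl
    rw [h]
    exact hτmeas (by trivial)
  -- P (B t) = ofReal (α ^ t)
  have hPB : ∀ t, P (B t) = ENNReal.ofReal (α ^ t) := by
    intro t
    have hU : B t = ⋃ k : ℕ, τ ⁻¹' {t + k} := by
      ext ω
      simp only [hBdef, Set.mem_setOf_eq, Set.mem_iUnion, Set.mem_preimage,
        Set.mem_singleton_iff]
      exact le_iff_exists_add
    have hdisj : Pairwise (Function.onFun Disjoint fun k : ℕ => τ ⁻¹' {t + k}) := by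
      intro i j hij
      refine Set.disjoint_left.mpr fun ω h1 h2 => hij ?_
      simp only [Set.mem_preimage, Set.mem_singleton_iff] at h1 h2
      omega
    rw [hU, measure_iUnion hdisj (fun k => hτmeas (measurableSet_singleton _))]
    have hsum : ∀ k : ℕ, P (τ ⁻¹' {t + k}) = ENNReal.ofReal ((1 - α) * α ^ (t + k)) := by
      intro k; exact hτdist (t + k)
    simp_rw [hsum]
    rw [← ENNReal.ofReal_tsum_of_nonneg (fun k => by positivity)]
    · congr 1
      have h2 : ∀ k : ℕ, (1 - α) * α ^ (t + k) = ((1 - α) * α ^ t) * α ^ k := by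
        intro k; rw [pow_add]; ring
      simp_rw [h2]
      rw [tsum_mul_left, tsum_geometric_of_lt_one hα0' hα1]
      field_simp
    · have h3 : Summable (fun k : ℕ => α ^ k) := summable_geometric_of_lt_one hα0' hα1
      simpa [pow_add, mul_assoc] using (h3.mul_left ((1 - α) * α ^ t))
  -- key per-term identity via independence
  have hkey : ∀ t : ℕ, ∫ ω, (B t).indicator (g t) ω ∂P = ∫ ω, α ^ t * g t ω ∂P := by
    intro t
    have hτ' : Measurable[MeasurableSpace.comap τ inferInstance] τ :=
      measurable_iff_comap_le.mpr le_rfl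
    have hindmeas : Measurable[MeasurableSpace.comap τ inferInstance]
        ((B t).indicator (1 : Ω → ℝ)) := by
      have h : (B t).indicator (1 : Ω → ℝ) =
          (fun n : ℕ => if t ≤ n then (1:ℝ) else 0) ∘ τ := by
        ext ω
        by_cases hc : t ≤ τ ω <;>
          simp [Set.indicator, hBdef, hc, Function.comp]
      rw [h]
      exact Measurable.comp (by exact measurable_from_top) hτ'
    have hIF : IndepFun ((B t).indicator (1 : Ω → ℝ)) (g t) P := by
      rw [IndepFun_iff_Indep]
      exact indep_of_indep_of_le_left
        (indep_of_indep_of_le_right hindep.symm (hgG t).comap_le)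
        hindmeas.comap_le
    clear hindep hindmeas hτ' hgG hσmeas hYmeas hG
    clear G
    have heq : ∀ ω, (B t).indicator (g t) ω =
        (B t).indicator (1 : Ω → ℝ) ω * g t ω := by
      intro ω
      by_cases hc : ω ∈ B t <;> simp [Set.indicator, hc]
    calc ∫ ω, (B t).indicator (g t) ω ∂P
        = ∫ ω, (B t).indicator (1 : Ω → ℝ) ω * g t ω ∂P := by
          simp_rw [heq]
      _ = (∫ ω, (B t).indicator (1 : Ω → ℝ) ω ∂P) * ∫ ω, g t ω ∂P := by
          refine hIF.integral_fun_mul_eq_mul_integral ?_ ?_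
          · exact (Measurable.aestronglyMeasurable
              (Measurable.indicator measurable_one (hBmeas t)))
          · exact (hgm t).aestronglyMeasurable
      _ = α ^ t * ∫ ω, g t ω ∂P := by
          rw [integral_indicator_one (hBmeas t), measureReal_def, hPB t,
            ENNReal.toReal_ofReal (by positivity)]
      _ = ∫ ω, α ^ t * g t ω ∂P := (integral_const_mul _ _).symm
  -- rewrite LHS integrand as tsum
  have hLHS : ∀ ω, (∑ t ∈ Finset.range ((min ((τ ω : ℕ∞)) (σ ω)).toNat + 1), Y t ω)
      = ∑' t : ℕ, (B t).indicator (g t) ω := by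
    intro ω
    have hmin_ne : min ((τ ω : ℕ∞)) (σ ω) ≠ ⊤ := by
      intro h
      have h2 := min_le_left ((τ ω : ℕ∞)) (σ ω)
      rw [h] at h2
      exact (ENat.coe_ne_top (τ ω)) (top_le_iff.mp h2)
    have hiff : ∀ t : ℕ, t ≤ (min ((τ ω : ℕ∞)) (σ ω)).toNat ↔
        (t ≤ τ ω ∧ (t:ℕ∞) ≤ σ ω) := by
      intro t
      rw [← ENat.coe_le_coe, ENat.coe_toNat hmin_ne, le_min_iff, Nat.cast_le]
    rw [tsum_eq_sum (s := Finset.range ((min ((τ ω : ℕ∞)) (σ ω)).toNat + 1))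
      (f := fun t => (B t).indicator (g t) ω)]
    · refine Finset.sum_congr rfl fun t ht => ?_
      rw [Finset.mem_range, Nat.lt_succ_iff, hiff] at ht
      simp [Set.indicator, hBdef, ht.1, hg, ht.2]
    · intro t ht
      rw [Finset.mem_range, Nat.lt_succ_iff, hiff, not_and_or] at ht
      rcases ht with h | h
      · simp [Set.indicator, hBdef, h]
      · by_cases h' : t ≤ τ ω <;> simp [Set.indicator, hBdef, h, h', hg]
  -- rewrite RHS integrand
  have hRHS : ∀ ω, (∑' t : ℕ, if (t : ℕ∞) ≤ σ ω then α ^ t * Y t ω else 0)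
      = ∑' t : ℕ, α ^ t * g t ω := by
    intro ω
    congr 1
    ext t
    simp only [hg]
    split <;> simp
  -- summability bound for geometric series in ℝ≥0∞
  have hgeo : ∑' t : ℕ, ENNReal.ofReal (α ^ t) ≠ ⊤ := by
    rw [← ENNReal.ofReal_tsum_of_nonneg (fun t => by positivity)
      (summable_geometric_of_lt_one hα0' hα1)]
    exact ENNReal.ofReal_ne_top
  -- swap integral and tsum on the left
  have hswapL : ∫ ω, (∑' t : ℕ, (B t).indicator (g t) ω) ∂P
      = ∑' t : ℕ, ∫ ω, (B t).indicator (g t) ω ∂P := by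
    refine integral_tsum
      (fun t => (Measurable.aestronglyMeasurable
        (Measurable.indicator (hgm t) (hBmeas t)))) ?_
    refine ne_top_of_le_ne_top hgeo (ENNReal.tsum_le_tsum fun t => ?_)
    calc ∫⁻ ω, ‖(B t).indicator (g t) ω‖₊ ∂P
        ≤ ∫⁻ ω, (B t).indicator (fun _ => (1:ENNReal)) ω ∂P := by
          refine lintegral_mono fun ω => ?_
          by_cases hc : ω ∈ B t
          · simp only [Set.indicator_of_mem hc]
            rw [← ENNReal.coe_one, ENNReal.coe_le_coe, ← NNReal.coe_le_coe,
              coe_nnnorm, NNReal.coe_one, Real.norm_eq_abs]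
            exact abs_le.mpr ⟨by linarith [hg0 t ω], hg1 t ω⟩
          · simp [Set.indicator_of_notMem hc]
      _ = P (B t) := lintegral_indicator_one (hBmeas t)
      _ = ENNReal.ofReal (α ^ t) := hPB t
  -- swap integral and tsum on the right
  have hswapR : ∫ ω, (∑' t : ℕ, α ^ t * g t ω) ∂P
      = ∑' t : ℕ, ∫ ω, α ^ t * g t ω ∂P := by
    refine integral_tsum
      (fun t => ((hgm t).const_mul _).aestronglyMeasurable) ?_
    refine ne_top_of_le_ne_top hgeo (ENNReal.tsum_le_tsum fun t => ?_)
    calc ∫⁻ ω, ‖α ^ t * g t ω‖₊ ∂P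
        ≤ ∫⁻ (_ : Ω), ENNReal.ofReal (α ^ t) ∂P := by
          refine lintegral_mono fun ω => ?_
          rw [← enorm_eq_nnnorm, ← ofReal_norm]
          refine ENNReal.ofReal_le_ofReal ?_
          rw [Real.norm_eq_abs, abs_mul, abs_of_nonneg (by positivity : (0:ℝ) ≤ α ^ t)]
          calc α ^ t * |g t ω| ≤ α ^ t * 1 := by
                refine mul_le_mul_of_nonneg_left ?_ (by positivity)
                exact abs_le.mpr ⟨by linarith [hg0 t ω], hg1 t ω⟩
            _ = α ^ t := mul_one _
      _ = ENNReal.ofReal (α ^ t) := by simp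
  calc ∫ ω, (∑ t ∈ Finset.range ((min ((τ ω : ℕ∞)) (σ ω)).toNat + 1), Y t ω) ∂P
      = ∫ ω, (∑' t : ℕ, (B t).indicator (g t) ω) ∂P := by simp_rw [hLHS]
    _ = ∑' t : ℕ, ∫ ω, (B t).indicator (g t) ω ∂P := hswapL
    _ = ∑' t : ℕ, ∫ ω, α ^ t * g t ω ∂P := by simp_rw [hkey]
    _ = ∫ ω, (∑' t : ℕ, α ^ t * g t ω) ∂P := hswapR.symm
    _ = ∫ ω, (∑' t : ℕ, if (t : ℕ∞) ≤ σ ω then α ^ t * Y t ω else 0) ∂P := by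
        simp_rw [hRHS]
end
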